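/- arXiv:1709.01436 — 3 statements merged into one kernel-verified Lean document; each statement's English description precedes it below -/
import Mathlib

section
/- Let λ > 0, n ≥ 0, and 0 < α_j ≤ 1 for 0 ≤ j ≤ n, and suppose α_n − α_0 > 0. Let p(n,t) = (−1)^n ∑_{k=n}^∞ (−λ)^k ∑_{Θ^k_n} t^{∑ k_j α_j} / Γ(1 + ∑ k_j α_j) (the SDTFPP-I series with orders α_j) and let q(n,t) = (−1)^n ∑_{k=n}^∞ (−λ)^k ∑_{Ω^k_n} t^{∑ k_j α_j} / Γ(1 + ∑ k_j α_j) (the SDTFPP-II series with the same orders β_j = α_j). Then for every t ≥ 0, p(n,t) = (I^{α_n − α_0}_t q(n,·))(t). -/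
open scoped BigOperators

/-- Riemann–Liouville fractional integral of order `α`. -/
noncomputable def rlInt (α : ℝ) (f : ℝ → ℝ) (t : ℝ) : ℝ :=
  (1 / Real.Gamma α) * ∫ s in (0:ℝ)..t, (t - s) ^ (α - 1) * f s

/-- `Theta n k` is the set of tuples `(k_0, …, k_n)` of nonnegative integers with
`k_0 + ⋯ + k_n = k` and `k_j ≥ 1` for `1 ≤ j ≤ n`. -/
def Theta (n k : ℕ) : Finset (Fin (n + 1) → ℕ) :=
  (Finset.Nat.antidiagonalTuple (n + 1) k).filter
    (fun κ => ∀ j : Fin (n + 1), 1 ≤ j.val → 1 ≤ κ j)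

/-- The state probabilities of SDTFPP-I (note that `Theta n k = ∅` for `k < n`,
so the series over all `k : ℕ` agrees with the series starting at `k = n`). -/
noncomputable def pI (lam : ℝ) (α : ℕ → ℝ) (n : ℕ) (t : ℝ) : ℝ :=
  (-1 : ℝ) ^ n * ∑' k : ℕ, (-lam) ^ k *
    ∑ κ ∈ Theta n k,
      t ^ (∑ j, (κ j : ℝ) * α j.val) / Real.Gamma (1 + ∑ j, (κ j : ℝ) * α j.val)
/-- `Omega n k` is the set of tuples `(k_0, …, k_n)` of nonnegative integers with
`k_0 + ⋯ + k_n = k` and `k_j ≥ 1` for `0 ≤ j ≤ n - 1` (`k_n` may be `0`). -/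
def Omega (n k : ℕ) : Finset (Fin (n + 1) → ℕ) :=
  (Finset.Nat.antidiagonalTuple (n + 1) k).filter
    (fun κ => ∀ j : Fin (n + 1), j.val < n → 1 ≤ κ j)

/-- The state probabilities of SDTFPP-II (note that `Omega n k = ∅` for `k < n`,
so the series over all `k : ℕ` agrees with the series starting at `k = n`). -/
noncomputable def qII (lam : ℝ) (β : ℕ → ℝ) (n : ℕ) (t : ℝ) : ℝ :=
  (-1 : ℝ) ^ n * ∑' k : ℕ, (-lam) ^ k *
    ∑ κ ∈ Omega n k,
      t ^ (∑ j, (κ j : ℝ) * β j.val) / Real.Gamma (1 + ∑ j, (κ j : ℝ) * β j.val)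

/-! ### Auxiliary lemmas -/

section Aux

open Real MeasureTheory

lemma myGamma_ge_one {x : ℝ} (hx : 2 ≤ x) : 1 ≤ Real.Gamma x := by
  rcases eq_or_lt_of_le hx with h | h
  · rw [← h]; rw [Real.Gamma_two]
  · have hcvx := Real.convexOn_Gamma
    have h1 : (1:ℝ) ∈ Set.Ioi (0:ℝ) := by norm_num
    have h2 : x ∈ Set.Ioi (0:ℝ) := by simp; linarith
    have hθ : (0:ℝ) ≤ (x-2)/(x-1) := by
      apply div_nonneg <;> linarith
    have hθ' : (0:ℝ) ≤ 1/(x-1) := by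
      apply div_nonneg <;> linarith
    have hx1 : x - 1 ≠ 0 := sub_ne_zero.mpr (by linarith)
    have hsum : (x-2)/(x-1) + 1/(x-1) = 1 := by field_simp; ring
    have key := hcvx.2 h1 h2 hθ hθ' hsum
    have hcomb : ((x-2)/(x-1)) • (1:ℝ) + (1/(x-1)) • x = 2 := by
      simp only [smul_eq_mul]; field_simp; ring
    rw [hcomb, Real.Gamma_one] at key
    rw [Real.Gamma_two] at key
    simp only [smul_eq_mul, mul_one] at key
    have key2 := mul_le_mul_of_nonneg_left key (le_of_lt (show (0:ℝ) < x-1 by linarith))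
    field_simp at key2
    rw [mul_div_cancel_left₀ _ hx1] at key2
    linarith

lemma myGamma_floor_le {x : ℝ} (hx : 0 ≤ x) :
    (Nat.factorial (Nat.floor x) : ℝ) / 2 ≤ Real.Gamma (1 + x) := by
  obtain ⟨m, hm⟩ : ∃ m, Nat.floor x = m := ⟨_, rfl⟩
  induction m generalizing x with
  | zero =>
    have hx1 : x < 1 := by
      rw [← Nat.floor_eq_zero]; exact hm
    have h2 : Real.Gamma (2 + x) = (1 + x) * Real.Gamma (1 + x) := by
      have := Real.Gamma_add_one (s := 1 + x) (by positivity)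
      rw [show (1:ℝ) + x + 1 = 2 + x by ring] at this
      exact this
    have h3 : (1:ℝ) ≤ Real.Gamma (2 + x) := myGamma_ge_one (by linarith)
    have h4 : 0 < Real.Gamma (1 + x) := Real.Gamma_pos_of_pos (by linarith)
    rw [hm]
    simp only [Nat.factorial_zero, Nat.cast_one]
    nlinarith
  | succ m ih =>
    have hx1 : (1:ℝ) ≤ x := by
      have : (1:ℝ) ≤ (Nat.floor x : ℝ) := by
        rw [hm]; exact_mod_cast Nat.one_le_iff_ne_zero.mpr (Nat.succ_ne_zero m)
      exact this.trans (Nat.floor_le hx)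
    have hfl : Nat.floor (x - 1) = m := by
      rw [Nat.floor_sub_one, hm]; rfl
    have ihx := ih (x := x - 1) (by linarith) hfl
    rw [hfl] at ihx
    have hrec : Real.Gamma (1 + x) = x * Real.Gamma (1 + (x - 1)) := by
      have := Real.Gamma_add_one (s := x) (by positivity)
      rw [show (1:ℝ) + x = x + 1 by ring, this, show (1:ℝ) + (x-1) = x by ring]
    rw [hrec, hm]
    have hxm : ((m:ℝ) + 1) ≤ x := by
      have : ((Nat.floor x : ℕ) : ℝ) ≤ x := Nat.floor_le hx
      rw [hm] at this; push_cast at this; linarith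
    have h4 : (0:ℝ) < Real.Gamma (1 + (x - 1)) := Real.Gamma_pos_of_pos (by linarith)
    calc (Nat.factorial (m+1) : ℝ) / 2 = ((m:ℝ)+1) * ((Nat.factorial m : ℝ)/2) := by
          rw [Nat.factorial_succ]; push_cast; ring
      _ ≤ x * Real.Gamma (1 + (x-1)) := by
          apply mul_le_mul hxm ihx (by positivity) (by linarith)

/-- `1/Γ(1+x) ≤ 2 y e^y / y^x` for `y ≥ 1`, `x ≥ 0`. -/

lemma myGamma_rpow_le {y x : ℝ} (hy : 1 ≤ y) (hx : 0 ≤ x) :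
    y ^ x / (2 * y * Real.exp y) ≤ Real.Gamma (1 + x) := by
  have hy0 : 0 < y := by linarith
  have h1 : y ^ x ≤ y * y ^ (Nat.floor x : ℕ) := by
    have : y ^ x ≤ y ^ ((Nat.floor x : ℝ) + 1) :=
      Real.rpow_le_rpow_of_exponent_le hy (le_of_lt (Nat.lt_floor_add_one x))
    rw [Real.rpow_add hy0, Real.rpow_one, Real.rpow_natCast] at this
    linarith [this]
  have h2 : y ^ (Nat.floor x : ℕ) / Real.exp y ≤ (Nat.factorial (Nat.floor x) : ℝ) := by
    rw [div_le_iff₀ (Real.exp_pos y)]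
    have h3 : y ^ (Nat.floor x) / (Nat.factorial (Nat.floor x) : ℝ) ≤ Real.exp y := by
      have := Real.sum_le_exp_of_nonneg (le_of_lt hy0) (Nat.floor x + 1)
      refine le_trans ?_ this
      exact Finset.single_le_sum (f := fun i => y ^ i / (Nat.factorial i : ℝ))
        (fun i _ => by positivity) (Finset.self_mem_range_succ _)
    have hfac : (0:ℝ) < (Nat.factorial (Nat.floor x) : ℝ) := by positivity
    calc y ^ (Nat.floor x) = (y ^ (Nat.floor x) / (Nat.factorial (Nat.floor x) : ℝ)) *
          (Nat.factorial (Nat.floor x) : ℝ) := by field_simp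
      _ ≤ Real.exp y * (Nat.factorial (Nat.floor x) : ℝ) := by
          exact mul_le_mul_of_nonneg_right h3 (le_of_lt hfac)
      _ = (Nat.factorial (Nat.floor x) : ℝ) * Real.exp y := by ring
  refine le_trans ?_ (myGamma_floor_le hx)
  rw [div_le_div_iff₀ (by positivity) (by norm_num)]
  have := mul_le_mul h1 (le_refl (1:ℝ)) (by norm_num) (by positivity)
  -- y^x * 2 ≤ floor! * (2 y e^y)
  have h2' : y ^ (Nat.floor x : ℕ) ≤ (Nat.factorial (Nat.floor x) : ℝ) * Real.exp y := by
    rw [div_le_iff₀ (Real.exp_pos y)] at h2; linarith [h2]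
  calc y ^ x * 2 ≤ (y * y ^ (Nat.floor x : ℕ)) * 2 := by linarith
    _ ≤ (y * ((Nat.factorial (Nat.floor x) : ℝ) * Real.exp y)) * 2 := by
        have := mul_le_mul_of_nonneg_left h2' (le_of_lt hy0)
        linarith
    _ = (Nat.factorial (Nat.floor x) : ℝ) * (2 * y * Real.exp y) := by ring

lemma myBeta {u v : ℝ} (hu : 0 < u) (hv : 0 < v) :
    ∫ x in (0:ℝ)..1, x ^ (u-1) * (1-x) ^ (v-1) =
      Real.Gamma u * Real.Gamma v / Real.Gamma (u + v) := by
  have hc := Complex.Gamma_mul_Gamma_eq_betaIntegral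
    (s := (u:ℂ)) (t := (v:ℂ)) (by simpa using hu) (by simpa using hv)
  have hbeta : Complex.betaIntegral (u:ℂ) (v:ℂ) =
      ((∫ x in (0:ℝ)..1, x ^ (u-1) * (1-x) ^ (v-1) : ℝ) : ℂ) := by
    rw [Complex.betaIntegral, ← intervalIntegral.integral_ofReal]
    refine intervalIntegral.integral_congr (fun x hx => ?_)
    rw [Set.uIcc_of_le (by norm_num : (0:ℝ) ≤ 1)] at hx
    obtain ⟨hx0, hx1⟩ := hx
    rw [show ((u:ℂ) - 1) = ((u - 1 : ℝ) : ℂ) by push_cast; ring,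
      show ((v:ℂ) - 1) = ((v - 1 : ℝ) : ℂ) by push_cast; ring,
      show (1 - (x:ℂ)) = ((1 - x : ℝ) : ℂ) by push_cast; ring,
      ← Complex.ofReal_cpow hx0, ← Complex.ofReal_cpow (by linarith : (0:ℝ) ≤ 1 - x)]
    push_cast
    ring
  rw [hbeta] at hc
  have hG : Complex.Gamma ((u:ℂ) + (v:ℂ)) = ((Real.Gamma (u+v) : ℝ) : ℂ) := by
    rw [← Complex.ofReal_add, Complex.Gamma_ofReal]
  rw [Complex.Gamma_ofReal, Complex.Gamma_ofReal, hG] at hc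
  have hne : Real.Gamma (u + v) ≠ 0 := (Real.Gamma_pos_of_pos (by linarith)).ne'
  have : ((Real.Gamma u * Real.Gamma v : ℝ) : ℂ) =
      ((Real.Gamma (u+v) * ∫ x in (0:ℝ)..1, x ^ (u-1) * (1-x) ^ (v-1) : ℝ) : ℂ) := by
    push_cast; exact hc
  have h2 := Complex.ofReal_inj.mp this
  field_simp
  linarith [h2]

/-- The key convolution power integral. -/

lemma myConv {δ γ t : ℝ} (hδ : 0 < δ) (hγ : 0 ≤ γ) (ht : 0 < t) :
    ∫ s in (0:ℝ)..t, (t - s) ^ (δ-1) * s ^ γ =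
      Real.Gamma (γ+1) * Real.Gamma δ / Real.Gamma (γ+1+δ) * t ^ (γ + δ) := by
  have hsub : ∫ s in (0:ℝ)..t, (t - s) ^ (δ-1) * s ^ γ
      = t • ∫ x in (0:ℝ)..1, (t - t*x) ^ (δ-1) * (t*x) ^ γ := by
    have := intervalIntegral.smul_integral_comp_mul_left
      (f := fun s => (t - s) ^ (δ-1) * s ^ γ) (a := (0:ℝ)) (b := 1) t
    rw [mul_zero, mul_one] at this
    exact this.symm
  rw [hsub]
  have hcong : ∫ x in (0:ℝ)..1, (t - t*x) ^ (δ-1) * (t*x) ^ γ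
      = t ^ (δ-1) * t ^ γ * ∫ x in (0:ℝ)..1, x ^ γ * (1-x) ^ (δ-1) := by
    rw [← intervalIntegral.integral_const_mul]
    refine intervalIntegral.integral_congr (fun x hx => ?_)
    rw [Set.uIcc_of_le (by norm_num : (0:ℝ) ≤ 1)] at hx
    obtain ⟨hx0, hx1⟩ := hx
    have h1 : t - t*x = t * (1-x) := by ring
    rw [h1, Real.mul_rpow (le_of_lt ht) (by linarith), Real.mul_rpow (le_of_lt ht) hx0]
    ring
  have hb := myBeta (show (0:ℝ) < γ+1 by linarith) hδ
  rw [show γ + 1 - 1 = γ by ring] at hb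
  rw [hcong, hb, smul_eq_mul]
  have htt : t * t ^ (δ-1) * t ^ γ = t ^ (γ+δ) := by
    rw [show t * t^(δ-1) * t^γ = t^(1:ℝ) * t^(δ-1) * t^γ by rw [Real.rpow_one],
      ← Real.rpow_add ht, ← Real.rpow_add ht, show (1:ℝ)+(δ-1)+γ = γ+δ by ring]
  rw [show t * (t ^ (δ-1) * t ^ γ * (Real.Gamma (γ+1) * Real.Gamma δ / Real.Gamma (γ+1+δ)))
    = Real.Gamma (γ+1) * Real.Gamma δ / Real.Gamma (γ+1+δ) * (t * t^(δ-1) * t^γ) by ring, htt]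

lemma myIntegrable {δ γ : ℝ} (t : ℝ) (hδ : 0 < δ) (hγ : 0 ≤ γ) :
    IntervalIntegrable (fun s => (t-s)^(δ-1) * s^γ) volume 0 t := by
  have h1 : IntervalIntegrable (fun x : ℝ => x ^ (δ-1)) volume (t - 0) (t - t) :=
    intervalIntegral.intervalIntegrable_rpow' (by linarith)
  have h2 := h1.comp_sub_left t
  rw [sub_sub_cancel, sub_sub_cancel] at h2
  exact h2.mul_continuousOn (Continuous.continuousOn (Real.continuous_rpow_const hγ))

lemma mySummable (n : ℕ) (α : ℕ → ℝ) (a : ℝ) (ha : 0 < a)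
    (hle : ∀ j : Fin (n+1), a ≤ α j.val) (h1 : ∀ j : Fin (n+1), α j.val ≤ 1)
    (lam t c : ℝ) (hlam : 0 < lam) (ht : 0 ≤ t) (hc : 0 ≤ c)
    (S : ℕ → Finset (Fin (n+1) → ℕ)) (hS : ∀ k, S k ⊆ Finset.Nat.antidiagonalTuple (n+1) k) :
    Summable (fun k => lam ^ k * ∑ κ ∈ S k,
      t ^ ((∑ j, (κ j:ℝ) * α j.val) + c) /
        Real.Gamma (1 + ((∑ j, (κ j:ℝ) * α j.val) + c))) := by
  set T := max 1 t with hTdef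
  have hT1 : (1:ℝ) ≤ T := le_max_left _ _
  have hTt : t ≤ T := le_max_right _ _
  have hT0 : (0:ℝ) < T := by linarith
  set B := 2 * lam * T with hBdef
  have hB : 0 < B := by positivity
  set y := max 1 (B ^ a⁻¹) with hydef
  have hy1 : (1:ℝ) ≤ y := le_max_left _ _
  have hy0 : (0:ℝ) < y := by linarith
  have hya : B ≤ y ^ a := by
    rcases le_or_gt B 1 with hB1 | hB1
    · calc B ≤ 1 := hB1
        _ = (1:ℝ) ^ a := (Real.one_rpow a).symm
        _ ≤ y ^ a := Real.rpow_le_rpow (by norm_num) hy1 ha.le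
    · have hby : B ^ a⁻¹ ≤ y := le_max_right _ _
      calc B = (B ^ a⁻¹) ^ a := by
            rw [← Real.rpow_mul hB.le, inv_mul_cancel₀ ha.ne', Real.rpow_one]
        _ ≤ y ^ a := Real.rpow_le_rpow (Real.rpow_nonneg hB.le _) hby ha.le
  set C := T ^ c * (2 * y * Real.exp y) with hCdef
  have hC0 : 0 < C := by positivity
  -- the dominating series
  have hgsum : Summable (fun k : ℕ => C * (((k:ℝ)+1)^(n+1) * (1/2:ℝ)^k)) := by
    have base : Summable (fun k : ℕ => (k:ℝ)^(n+1) * (1/2:ℝ)^k) :=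
      summable_pow_mul_geometric_of_norm_lt_one (n+1) (by rw [Real.norm_eq_abs, abs_of_nonneg] <;> norm_num)
    have shift := (_root_.summable_nat_add_iff 1).mpr base
    have shift' : Summable (fun k : ℕ => ((k:ℝ)+1)^(n+1) * (1/2:ℝ)^(k+1)) := by
      refine shift.congr (fun k => ?_)
      push_cast
      ring
    have : (fun k : ℕ => ((k:ℝ)+1)^(n+1)*(1/2:ℝ)^k)
        = fun k : ℕ => 2 * (((k:ℝ)+1)^(n+1) * (1/2:ℝ)^(k+1)) := by
      funext k; ring
    have h2 : Summable (fun k : ℕ => ((k:ℝ)+1)^(n+1)*(1/2:ℝ)^k) := by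
      rw [this]; exact shift'.mul_left 2
    exact h2.mul_left C
  refine Summable.of_nonneg_of_le (fun k => ?_) (fun k => ?_) hgsum
  · refine mul_nonneg (by positivity) (Finset.sum_nonneg (fun κ _ => ?_))
    have hnn : (0:ℝ) ≤ ∑ j, (κ j:ℝ) * α j.val :=
      Finset.sum_nonneg fun j _ => mul_nonneg (Nat.cast_nonneg _) (ha.le.trans (hle j))
    exact div_nonneg (Real.rpow_nonneg ht _)
      (Real.Gamma_pos_of_pos (by linarith)).le
  · -- the main estimate
    have hcard : ((S k).card : ℝ) ≤ ((k:ℝ)+1)^(n+1) := by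
      have hsub : S k ⊆ Fintype.piFinset (fun _ : Fin (n+1) => Finset.range (k+1)) := by
        intro κ hκ
        refine Fintype.mem_piFinset.mpr (fun j => Finset.mem_range.mpr ?_)
        have hsum := Finset.Nat.mem_antidiagonalTuple.mp (hS k hκ)
        have : κ j ≤ k := hsum ▸ Finset.single_le_sum (f := κ)
          (fun i _ => Nat.zero_le _) (Finset.mem_univ j)
        omega
      have := Finset.card_le_card hsub
      rw [Fintype.card_piFinset] at this
      simp only [Finset.card_range, Finset.prod_const, Finset.card_univ, Fintype.card_fin] at this
      calc ((S k).card : ℝ) ≤ ((k+1)^(n+1) : ℕ) := by exact_mod_cast this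
        _ = ((k:ℝ)+1)^(n+1) := by push_cast; ring
    set b : ℝ := (T ^ c * (2*y*Real.exp y)) * (T^k / (y^a)^k) with hbdef
    have hb0 : 0 ≤ b := by positivity
    have hterm : ∀ κ ∈ S k,
        t ^ ((∑ j, (κ j:ℝ) * α j.val) + c) /
          Real.Gamma (1 + ((∑ j, (κ j:ℝ) * α j.val) + c)) ≤ b := by
      intro κ hκ
      set e := ∑ j, (κ j:ℝ) * α j.val with hedef
      have hsumk : ∑ j, (κ j:ℝ) = (k:ℝ) := by
        have hh := Finset.Nat.mem_antidiagonalTuple.mp (hS k hκ)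
        calc ∑ j, (κ j:ℝ) = ((∑ j, κ j : ℕ) : ℝ) := by push_cast; rfl
          _ = (k:ℝ) := by rw [hh]
      have he0 : 0 ≤ e :=
        Finset.sum_nonneg fun j _ => mul_nonneg (Nat.cast_nonneg _) (ha.le.trans (hle j))
      have hek : e ≤ k := by
        calc e ≤ ∑ j, (κ j:ℝ) * 1 :=
              Finset.sum_le_sum fun j _ => mul_le_mul_of_nonneg_left (h1 j) (Nat.cast_nonneg _)
          _ = (k:ℝ) := by rw [← hsumk]; simp
      have hak : a * k ≤ e := by
        calc a * k = ∑ j, (κ j:ℝ) * a := by rw [← Finset.sum_mul, hsumk]; ring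
          _ ≤ e := Finset.sum_le_sum fun j _ => mul_le_mul_of_nonneg_left (hle j) (Nat.cast_nonneg _)
      have hE0 : 0 ≤ e + c := by linarith
      have htE : t ^ (e + c) ≤ T^k * T^c := by
        calc t ^ (e+c) ≤ T ^ (e+c) := Real.rpow_le_rpow ht hTt hE0
          _ ≤ T ^ ((k:ℝ)+c) := Real.rpow_le_rpow_of_exponent_le hT1 (by linarith)
          _ = T^(k:ℝ) * T^c := Real.rpow_add hT0 _ _
          _ = T^k * T^c := by rw [Real.rpow_natCast]
      have hGlb : y^(a*(k:ℝ)) / (2*y*Real.exp y) ≤ Real.Gamma (1 + (e + c)) := by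
        refine le_trans ?_ (myGamma_rpow_le hy1 hE0)
        have h1' : y ^ (a*(k:ℝ)) ≤ y ^ (e+c) :=
          Real.rpow_le_rpow_of_exponent_le hy1 (by linarith)
        gcongr
      have hGlb0 : 0 < y^(a*(k:ℝ)) / (2*y*Real.exp y) := by positivity
      have hkey : t ^ (e+c) / Real.Gamma (1 + (e+c))
          ≤ (T^k * T^c) / (y^(a*(k:ℝ)) / (2*y*Real.exp y)) := by
        apply div_le_div₀ (by positivity) htE hGlb0 hGlb
      refine hkey.trans (le_of_eq ?_)
      rw [hbdef, div_div_eq_mul_div]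
      have : y ^ (a*(k:ℝ)) = (y^a)^k := by
        rw [Real.rpow_mul hy0.le, Real.rpow_natCast]
      rw [this]
      ring
    calc lam ^ k * ∑ κ ∈ S k,
          t ^ ((∑ j, (κ j:ℝ) * α j.val) + c) /
            Real.Gamma (1 + ((∑ j, (κ j:ℝ) * α j.val) + c))
        ≤ lam ^ k * ((S k).card • b) := by
          apply mul_le_mul_of_nonneg_left (Finset.sum_le_card_nsmul _ _ _ hterm) (by positivity)
      _ = lam ^ k * (((S k).card : ℝ) * b) := by rw [nsmul_eq_mul]
      _ ≤ lam ^ k * (((k:ℝ)+1)^(n+1) * b) := by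
          apply mul_le_mul_of_nonneg_left (mul_le_mul_of_nonneg_right hcard hb0) (by positivity)
      _ = (T^c * (2*y*Real.exp y)) * (((k:ℝ)+1)^(n+1)) * ((lam * T / y^a)^k) := by
          rw [hbdef, div_pow, mul_pow]
          field_simp
      _ ≤ C * (((k:ℝ)+1)^(n+1) * (1/2:ℝ)^k) := by
          rw [hCdef, mul_assoc]
          apply mul_le_mul_of_nonneg_left ?_ (by positivity)
          apply mul_le_mul_of_nonneg_left ?_ (by positivity)
          apply pow_le_pow_left₀ (by positivity)
          rw [div_le_div_iff₀ (by positivity) (by norm_num)]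
          calc lam * T * 2 = B := by rw [hBdef]; ring
            _ ≤ y ^ a := hya
            _ = 1 * y ^ a := by ring

lemma mySumBij (n k : ℕ) (hn : 1 ≤ n) (α : ℕ → ℝ) (f : ℝ → ℝ) :
    ∑ κ ∈ Theta n k, f (∑ j, (κ j:ℝ) * α j.val)
      = ∑ κ ∈ Omega n k, f ((∑ j, (κ j:ℝ) * α j.val) + (α n - α 0)) := by
  have hvalL : (Fin.last n).val = n := Fin.val_last n
  have hL0 : (Fin.last n) ≠ (0 : Fin (n+1)) := by
    intro h
    have := congrArg Fin.val h
    rw [hvalL] at this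
    simp at this
    omega
  set L := Fin.last n with hLdef
  set σ : (Fin (n+1) → ℕ) → (Fin (n+1) → ℕ) :=
    fun κ j => if j = L then κ j - 1 else if j = 0 then κ j + 1 else κ j with hσ
  set τ : (Fin (n+1) → ℕ) → (Fin (n+1) → ℕ) :=
    fun κ j => if j = L then κ j + 1 else if j = 0 then κ j - 1 else κ j with hτ
  have hσL : ∀ κ, σ κ L = κ L - 1 := fun κ => by simp [hσ]
  have hσ0 : ∀ κ, σ κ 0 = κ 0 + 1 := fun κ => by simp [hσ, Ne.symm hL0]
  have hσo : ∀ κ (j : Fin (n+1)), j ≠ L → j ≠ 0 → σ κ j = κ j := fun κ j h1 h2 => by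
    simp [hσ, h1, h2]
  have hτL : ∀ κ, τ κ L = κ L + 1 := fun κ => by simp [hτ]
  have hτ0 : ∀ κ, τ κ 0 = κ 0 - 1 := fun κ => by simp [hτ, Ne.symm hL0]
  have hτo : ∀ κ (j : Fin (n+1)), j ≠ L → j ≠ 0 → τ κ j = κ j := fun κ j h1 h2 => by
    simp [hτ, h1, h2]
  have splitσ : ∀ κ : Fin (n+1) → ℕ, 1 ≤ κ L → ∀ j : Fin (n+1), (σ κ j : ℤ) = (κ j : ℤ) +
      ((if j = 0 then (1:ℤ) else 0) + (if j = L then (-1:ℤ) else 0)) := by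
    intro κ hκL j
    by_cases hjL : j = L
    · subst hjL
      rw [hσL, if_neg hL0, if_pos rfl]
      push_cast [hκL]
      ring
    · by_cases hj0 : j = 0
      · subst hj0
        rw [hσ0, if_pos rfl, if_neg (Ne.symm hL0)]
        push_cast
        ring
      · rw [hσo κ j hjL hj0, if_neg hj0, if_neg hjL]
        ring
  have splitτ : ∀ κ : Fin (n+1) → ℕ, 1 ≤ κ 0 → ∀ j : Fin (n+1), (τ κ j : ℤ) = (κ j : ℤ) +
      ((if j = L then (1:ℤ) else 0) + (if j = 0 then (-1:ℤ) else 0)) := by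
    intro κ hκ0 j
    by_cases hjL : j = L
    · subst hjL
      rw [hτL, if_pos rfl, if_neg hL0]
      push_cast
      ring
    · by_cases hj0 : j = 0
      · subst hj0
        rw [hτ0, if_neg (Ne.symm hL0), if_pos rfl]
        push_cast [hκ0]
        ring
      · rw [hτo κ j hjL hj0, if_neg hjL, if_neg hj0]
        ring
  refine Finset.sum_nbij' (i := σ) (j := τ) ?_ ?_ ?_ ?_ ?_
  · -- σ maps Theta to Omega
    intro κ hκ
    rw [Theta, Finset.mem_filter] at hκ
    obtain ⟨hκ1, hκ2⟩ := hκ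
    have hκL : 1 ≤ κ L := hκ2 L (by rw [hLdef, hvalL]; omega)
    rw [Omega, Finset.mem_filter]
    constructor
    · rw [Finset.Nat.mem_antidiagonalTuple] at hκ1 ⊢
      have hz : (∑ j, (σ κ j : ℤ)) = ∑ j, (κ j : ℤ) := by
        rw [Finset.sum_congr rfl (fun j _ => splitσ κ hκL j), Finset.sum_add_distrib,
          Finset.sum_add_distrib]
        simp
      have hc : ((∑ j, σ κ j : ℕ) : ℤ) = ((∑ j, κ j : ℕ) : ℤ) := by push_cast; exact hz
      have := Nat.cast_inj.mp hc
      omega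
    · intro j hj
      have hjL : j ≠ L := by
        intro h; subst h; rw [hvalL] at hj; omega
      by_cases hj0 : j = 0
      · subst hj0; rw [hσ0]; omega
      · rw [hσo κ j hjL hj0]
        refine hκ2 j ?_
        have : j.val ≠ 0 := fun h => hj0 (Fin.ext h)
        omega
  · -- τ maps Omega to Theta
    intro κ hκ
    rw [Omega, Finset.mem_filter] at hκ
    obtain ⟨hκ1, hκ2⟩ := hκ
    have hκ0 : 1 ≤ κ 0 := hκ2 0 (by simp; omega)
    rw [Theta, Finset.mem_filter]
    constructor
    · rw [Finset.Nat.mem_antidiagonalTuple] at hκ1 ⊢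
      have hz : (∑ j, (τ κ j : ℤ)) = ∑ j, (κ j : ℤ) := by
        rw [Finset.sum_congr rfl (fun j _ => splitτ κ hκ0 j), Finset.sum_add_distrib,
          Finset.sum_add_distrib]
        simp
      have hc : ((∑ j, τ κ j : ℕ) : ℤ) = ((∑ j, κ j : ℕ) : ℤ) := by push_cast; exact hz
      have := Nat.cast_inj.mp hc
      omega
    · intro j hj
      by_cases hjL : j = L
      · subst hjL; rw [hτL]; omega
      · have hj0 : j ≠ 0 := by
          intro h; subst h; simp at hj
        rw [hτo κ j hjL hj0]
        refine hκ2 j ?_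
        have h1 : j.val ≠ n := fun h => hjL (Fin.ext (by rw [hvalL]; exact h))
        have h2 : j.val < n + 1 := j.isLt
        omega
  · -- left inverse
    intro κ hκ
    rw [Theta, Finset.mem_filter] at hκ
    have hκL : 1 ≤ κ L := hκ.2 L (by rw [hLdef, hvalL]; omega)
    funext j
    by_cases hjL : j = L
    · subst hjL
      rw [hτL, hσL]; omega
    · by_cases hj0 : j = 0
      · subst hj0
        rw [hτ0, hσ0]; omega
      · rw [hτo _ j hjL hj0, hσo κ j hjL hj0]
  · -- right inverse
    intro κ hκ
    rw [Omega, Finset.mem_filter] at hκ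
    have hκ0 : 1 ≤ κ 0 := hκ.2 0 (by simp; omega)
    funext j
    by_cases hjL : j = L
    · subst hjL
      rw [hσL, hτL]; omega
    · by_cases hj0 : j = 0
      · subst hj0
        rw [hσ0, hτ0]; omega
      · rw [hσo _ j hjL hj0, hτo κ j hjL hj0]
  · -- values agree
    intro κ hκ
    rw [Theta, Finset.mem_filter] at hκ
    have hκL : 1 ≤ κ L := hκ.2 L (by rw [hLdef, hvalL]; omega)
    congr 1
    have hptwise : ∀ j : Fin (n+1), (σ κ j : ℝ) * α j.val = (κ j : ℝ) * α j.val +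
        ((if j = 0 then (1:ℝ) else 0) + (if j = L then (-1:ℝ) else 0)) * α j.val := by
      intro j
      have := splitσ κ hκL j
      have hr : (σ κ j : ℝ) = (κ j : ℝ) +
          ((if j = 0 then (1:ℝ) else 0) + (if j = L then (-1:ℝ) else 0)) := by
        have := congrArg (Int.cast : ℤ → ℝ) this
        push_cast at this
        convert this using 2 <;> split <;> simp
      rw [hr]; ring
    rw [Finset.sum_congr rfl (fun j _ => hptwise j), Finset.sum_add_distrib]
    have hcorr : ∑ j : Fin (n+1), ((if j = 0 then (1:ℝ) else 0) +
        (if j = L then (-1:ℝ) else 0)) * α j.val = α 0 - α n := by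
      simp only [add_mul, ite_mul, one_mul, zero_mul, neg_one_mul, Finset.sum_add_distrib,
        Finset.sum_ite_eq', Finset.mem_univ, if_pos]
      rw [hLdef, hvalL]
      simp
      ring
    rw [hcorr]
    ring

end Aux

section MainProof

open Real MeasureTheory

/-- Relationship between the state probabilities of SDTFPP-I and SDTFPP-II when
`α_n > α_0`: `p^{α_n}(n, t) = I^{α_n − α_0}_t Pr{N_2(t, λ) = n}`. -/
theorem sdtfppI_eq_rlInt_sdtfppII (lam : ℝ) (hlam : 0 < lam) (n : ℕ)
    (α : ℕ → ℝ) (hα : ∀ j ≤ n, 0 < α j ∧ α j ≤ 1) (hgap : 0 < α n - α 0)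
    (t : ℝ) (ht : 0 ≤ t) :
    pI lam α n t = rlInt (α n - α 0) (fun u => qII lam α n u) t := by
  have hn : 1 ≤ n := by
    rcases Nat.eq_zero_or_pos n with h | h
    · subst h; simp at hgap
    · exact h
  have hδ : 0 < α n - α 0 := hgap
  have hΓδ : 0 < Real.Gamma (α n - α 0) := Real.Gamma_pos_of_pos hδ
  have hα0 : 0 < α 0 := (hα 0 (Nat.zero_le n)).1
  have hαn : 0 < α n := (hα n le_rfl).1
  have h1 : ∀ j : Fin (n+1), α j.val ≤ 1 := fun j => (hα j.val (Nat.lt_succ_iff.mp j.isLt)).2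
  obtain ⟨a, ha0, hale⟩ : ∃ a : ℝ, 0 < a ∧ ∀ j : Fin (n+1), a ≤ α j.val := by
    have hne : ((Finset.range (n+1)).image α).Nonempty :=
      ⟨α 0, Finset.mem_image.2 ⟨0, by simp, rfl⟩⟩
    refine ⟨((Finset.range (n+1)).image α).min' hne, ?_, ?_⟩
    · obtain ⟨j, hj, hje⟩ := Finset.mem_image.1 (((Finset.range (n+1)).image α).min'_mem hne)
      rw [← hje]
      exact (hα j (Nat.lt_succ_iff.mp (Finset.mem_range.mp hj))).1
    · intro j
      exact ((Finset.range (n+1)).image α).min'_le _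
        (Finset.mem_image.2 ⟨j.val, Finset.mem_range.mpr j.isLt, rfl⟩)
  have hE0 : ∀ κ : Fin (n+1) → ℕ, 0 ≤ ∑ j, (κ j:ℝ) * α j.val := fun κ =>
    Finset.sum_nonneg fun j _ => mul_nonneg (Nat.cast_nonneg _) (ha0.le.trans (hale j))
  rcases ht.eq_or_lt with rfl | ht0
  · -- t = 0 case
    rw [rlInt, intervalIntegral.integral_same, mul_zero, pI]
    have hz : ∀ k : ℕ, (-lam)^k * ∑ κ ∈ Theta n k,
        (0:ℝ) ^ (∑ j, (κ j:ℝ) * α j.val) / Real.Gamma (1 + ∑ j, (κ j:ℝ) * α j.val) = 0 := by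
      intro k
      rw [Finset.sum_eq_zero, mul_zero]
      intro κ hκ
      rw [Theta, Finset.mem_filter] at hκ
      have hκL : 1 ≤ κ (Fin.last n) := hκ.2 _ (by rw [Fin.val_last]; omega)
      have hκL' : (1:ℝ) ≤ (κ (Fin.last n) : ℝ) := by exact_mod_cast hκL
      have hpos : 0 < ∑ j, (κ j:ℝ) * α j.val := by
        have hterm : α n ≤ (κ (Fin.last n):ℝ) * α ((Fin.last n : Fin (n+1)).val) := by
          rw [Fin.val_last]
          nlinarith
        have hrest := Finset.single_le_sum (f := fun j : Fin (n+1) => (κ j:ℝ) * α j.val)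
          (fun j _ => mul_nonneg (Nat.cast_nonneg _) (ha0.le.trans (hale j)))
          (Finset.mem_univ (Fin.last n))
        calc (0:ℝ) < α n := hαn
          _ ≤ _ := hterm
          _ ≤ _ := hrest
      rw [Real.zero_rpow hpos.ne', zero_div]
    rw [tsum_congr hz, tsum_zero, mul_zero]
  · -- t > 0 main case
    -- abbreviations through explicit formulas
    have hiint : ∀ (k : ℕ) (c : ℝ), IntervalIntegrable (fun s =>
        (t-s)^(α n - α 0 - 1) * (c * ∑ κ ∈ Omega n k,
          s ^ (∑ j, (κ j:ℝ) * α j.val) / Real.Gamma (1 + ∑ j, (κ j:ℝ) * α j.val)))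
        volume 0 t := by
      intro k c
      have heq : (fun s => (t-s)^(α n - α 0 - 1) * (c * ∑ κ ∈ Omega n k,
            s ^ (∑ j, (κ j:ℝ) * α j.val) / Real.Gamma (1 + ∑ j, (κ j:ℝ) * α j.val)))
          = (∑ κ ∈ Omega n k, fun s =>
              (c / Real.Gamma (1 + ∑ j, (κ j:ℝ) * α j.val)) *
                ((t-s)^(α n - α 0 - 1) * s ^ (∑ j, (κ j:ℝ) * α j.val))) := by
        funext s
        rw [Finset.sum_apply, Finset.mul_sum, Finset.mul_sum]
        exact Finset.sum_congr rfl fun κ _ => by ring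
      rw [heq]
      exact IntervalIntegrable.sum _ fun κ _ =>
        (myIntegrable t hδ (hE0 κ)).const_mul _
    have hval : ∀ (k : ℕ) (c : ℝ), (∫ s in (0:ℝ)..t,
        (t-s)^(α n - α 0 - 1) * (c * ∑ κ ∈ Omega n k,
          s ^ (∑ j, (κ j:ℝ) * α j.val) / Real.Gamma (1 + ∑ j, (κ j:ℝ) * α j.val)))
        = Real.Gamma (α n - α 0) * (c * ∑ κ ∈ Omega n k,
            t ^ ((∑ j, (κ j:ℝ) * α j.val) + (α n - α 0)) /
              Real.Gamma (1 + ((∑ j, (κ j:ℝ) * α j.val) + (α n - α 0)))) := by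
      intro k c
      have heq : ∀ s : ℝ, (t-s)^(α n - α 0 - 1) * (c * ∑ κ ∈ Omega n k,
            s ^ (∑ j, (κ j:ℝ) * α j.val) / Real.Gamma (1 + ∑ j, (κ j:ℝ) * α j.val))
          = ∑ κ ∈ Omega n k,
              (c / Real.Gamma (1 + ∑ j, (κ j:ℝ) * α j.val)) *
                ((t-s)^(α n - α 0 - 1) * s ^ (∑ j, (κ j:ℝ) * α j.val)) := by
        intro s
        rw [Finset.mul_sum, Finset.mul_sum]
        exact Finset.sum_congr rfl fun κ _ => by ring
      rw [intervalIntegral.integral_congr (fun s _ => heq s),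
        intervalIntegral.integral_finset_sum
          (fun κ _ => ((myIntegrable t hδ (hE0 κ)).const_mul _)),
        Finset.mul_sum, Finset.mul_sum]
      refine Finset.sum_congr rfl fun κ _ => ?_
      rw [intervalIntegral.integral_const_mul, myConv hδ (hE0 κ) ht0]
      have hΓ1 : Real.Gamma (1 + ∑ j, (κ j:ℝ) * α j.val) ≠ 0 :=
        (Real.Gamma_pos_of_pos (by linarith [hE0 κ])).ne'
      have hΓ2 : Real.Gamma (1 + ((∑ j, (κ j:ℝ) * α j.val) + (α n - α 0))) ≠ 0 :=
        (Real.Gamma_pos_of_pos (by linarith [hE0 κ])).ne'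
      rw [show (∑ j, (κ j:ℝ) * α j.val) + 1 = 1 + (∑ j, (κ j:ℝ) * α j.val) by ring,
        show (1 + (∑ j, (κ j:ℝ) * α j.val)) + (α n - α 0)
          = 1 + ((∑ j, (κ j:ℝ) * α j.val) + (α n - α 0)) by ring]
      field_simp
    -- the swap
    have hFint : ∀ k : ℕ, Integrable (fun s => (-1:ℝ)^n * ((t-s)^(α n - α 0 - 1) *
        ((-lam)^k * ∑ κ ∈ Omega n k,
          s ^ (∑ j, (κ j:ℝ) * α j.val) / Real.Gamma (1 + ∑ j, (κ j:ℝ) * α j.val))))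
        (volume.restrict (Set.Ioc 0 t)) := by
      intro k
      have h := ((hiint k ((-lam)^k)).const_mul ((-1:ℝ)^n))
      rw [intervalIntegrable_iff_integrableOn_Ioc_of_le ht] at h
      exact h
    have hGnonneg : ∀ k : ℕ, ∀ s ∈ Set.Ioc (0:ℝ) t,
        ‖(-1:ℝ)^n * ((t-s)^(α n - α 0 - 1) * ((-lam)^k * ∑ κ ∈ Omega n k,
          s ^ (∑ j, (κ j:ℝ) * α j.val) / Real.Gamma (1 + ∑ j, (κ j:ℝ) * α j.val)))‖
        ≤ (t-s)^(α n - α 0 - 1) * (lam^k * ∑ κ ∈ Omega n k,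
          s ^ (∑ j, (κ j:ℝ) * α j.val) / Real.Gamma (1 + ∑ j, (κ j:ℝ) * α j.val)) := by
      intro k s hs
      have hs0 : 0 < s := hs.1
      have hst : s ≤ t := hs.2
      have hsumnn : 0 ≤ ∑ κ ∈ Omega n k,
          s ^ (∑ j, (κ j:ℝ) * α j.val) / Real.Gamma (1 + ∑ j, (κ j:ℝ) * α j.val) :=
        Finset.sum_nonneg fun κ _ => div_nonneg (Real.rpow_nonneg hs0.le _)
          (Real.Gamma_pos_of_pos (by linarith [hE0 κ])).le
      have hts : (0:ℝ) ≤ (t-s)^(α n - α 0 - 1) := Real.rpow_nonneg (by linarith) _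
      rw [Real.norm_eq_abs, abs_mul, abs_mul, abs_mul, abs_pow, abs_pow, abs_neg, abs_one,
        one_pow, one_mul, abs_neg, abs_of_pos hlam, abs_of_nonneg hts, abs_of_nonneg hsumnn]
    have hbound : ∀ k : ℕ, (∫ s in Set.Ioc (0:ℝ) t,
        ‖(-1:ℝ)^n * ((t-s)^(α n - α 0 - 1) * ((-lam)^k * ∑ κ ∈ Omega n k,
          s ^ (∑ j, (κ j:ℝ) * α j.val) / Real.Gamma (1 + ∑ j, (κ j:ℝ) * α j.val)))‖)
        ≤ Real.Gamma (α n - α 0) * (lam^k * ∑ κ ∈ Omega n k,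
            t ^ ((∑ j, (κ j:ℝ) * α j.val) + (α n - α 0)) /
              Real.Gamma (1 + ((∑ j, (κ j:ℝ) * α j.val) + (α n - α 0)))) := by
      intro k
      have hGint : Integrable (fun s => (t-s)^(α n - α 0 - 1) * (lam^k * ∑ κ ∈ Omega n k,
          s ^ (∑ j, (κ j:ℝ) * α j.val) / Real.Gamma (1 + ∑ j, (κ j:ℝ) * α j.val)))
          (volume.restrict (Set.Ioc 0 t)) := by
        have h := hiint k (lam^k)
        rw [intervalIntegrable_iff_integrableOn_Ioc_of_le ht] at h
        exact h
      calc (∫ s in Set.Ioc (0:ℝ) t, ‖(-1:ℝ)^n * ((t-s)^(α n - α 0 - 1) *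
              ((-lam)^k * ∑ κ ∈ Omega n k, s ^ (∑ j, (κ j:ℝ) * α j.val) /
                Real.Gamma (1 + ∑ j, (κ j:ℝ) * α j.val)))‖)
          ≤ ∫ s in Set.Ioc (0:ℝ) t, (t-s)^(α n - α 0 - 1) * (lam^k * ∑ κ ∈ Omega n k,
              s ^ (∑ j, (κ j:ℝ) * α j.val) / Real.Gamma (1 + ∑ j, (κ j:ℝ) * α j.val)) := by
            refine setIntegral_mono_on ((hFint k).norm) hGint measurableSet_Ioc ?_
            exact hGnonneg k
        _ = Real.Gamma (α n - α 0) * (lam^k * ∑ κ ∈ Omega n k,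
              t ^ ((∑ j, (κ j:ℝ) * α j.val) + (α n - α 0)) /
                Real.Gamma (1 + ((∑ j, (κ j:ℝ) * α j.val) + (α n - α 0)))) := by
            rw [← intervalIntegral.integral_of_le ht]
            exact hval k (lam^k)
    have hFsum : Summable (fun k : ℕ => ∫ s in Set.Ioc (0:ℝ) t,
        ‖(-1:ℝ)^n * ((t-s)^(α n - α 0 - 1) * ((-lam)^k * ∑ κ ∈ Omega n k,
          s ^ (∑ j, (κ j:ℝ) * α j.val) / Real.Gamma (1 + ∑ j, (κ j:ℝ) * α j.val)))‖) := by
      refine Summable.of_nonneg_of_le (fun k => integral_nonneg fun s => norm_nonneg _)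
        hbound ?_
      exact (mySummable n α a ha0 hale h1 lam t (α n - α 0) hlam ht hδ.le
        (Omega n) (fun k => Finset.filter_subset _ _)).mul_left _
    have hswap : (∫ s in (0:ℝ)..t, (t-s)^(α n - α 0 - 1) * qII lam α n s)
        = ∑' k : ℕ, ((-1:ℝ)^n * ∫ s in (0:ℝ)..t, (t-s)^(α n - α 0 - 1) *
            ((-lam)^k * ∑ κ ∈ Omega n k,
              s ^ (∑ j, (κ j:ℝ) * α j.val) / Real.Gamma (1 + ∑ j, (κ j:ℝ) * α j.val))) := by
      have hptw : ∀ s : ℝ, (t-s)^(α n - α 0 - 1) * qII lam α n s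
          = ∑' k : ℕ, (-1:ℝ)^n * ((t-s)^(α n - α 0 - 1) * ((-lam)^k * ∑ κ ∈ Omega n k,
              s ^ (∑ j, (κ j:ℝ) * α j.val) / Real.Gamma (1 + ∑ j, (κ j:ℝ) * α j.val))) := by
        intro s
        rw [qII, show (t-s)^(α n - α 0 - 1) * ((-1:ℝ)^n * ∑' k : ℕ, (-lam)^k * ∑ κ ∈ Omega n k,
            s ^ (∑ j, (κ j:ℝ) * α j.val) / Real.Gamma (1 + ∑ j, (κ j:ℝ) * α j.val))
          = ((t-s)^(α n - α 0 - 1) * (-1:ℝ)^n) * ∑' k : ℕ, (-lam)^k * ∑ κ ∈ Omega n k,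
            s ^ (∑ j, (κ j:ℝ) * α j.val) / Real.Gamma (1 + ∑ j, (κ j:ℝ) * α j.val) by ring,
          ← tsum_mul_left]
        exact tsum_congr fun k => by ring
      calc (∫ s in (0:ℝ)..t, (t-s)^(α n - α 0 - 1) * qII lam α n s)
          = ∫ s in (0:ℝ)..t, ∑' k : ℕ, (-1:ℝ)^n * ((t-s)^(α n - α 0 - 1) *
              ((-lam)^k * ∑ κ ∈ Omega n k, s ^ (∑ j, (κ j:ℝ) * α j.val) /
                Real.Gamma (1 + ∑ j, (κ j:ℝ) * α j.val))) :=
            intervalIntegral.integral_congr (fun s _ => hptw s)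
        _ = ∫ s in Set.Ioc (0:ℝ) t, ∑' k : ℕ, (-1:ℝ)^n * ((t-s)^(α n - α 0 - 1) *
              ((-lam)^k * ∑ κ ∈ Omega n k, s ^ (∑ j, (κ j:ℝ) * α j.val) /
                Real.Gamma (1 + ∑ j, (κ j:ℝ) * α j.val))) :=
            intervalIntegral.integral_of_le ht
        _ = ∑' k : ℕ, ∫ s in Set.Ioc (0:ℝ) t, (-1:ℝ)^n * ((t-s)^(α n - α 0 - 1) *
              ((-lam)^k * ∑ κ ∈ Omega n k, s ^ (∑ j, (κ j:ℝ) * α j.val) /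
                Real.Gamma (1 + ∑ j, (κ j:ℝ) * α j.val))) :=
            (MeasureTheory.integral_tsum_of_summable_integral_norm hFint hFsum).symm
        _ = _ := by
            refine tsum_congr fun k => ?_
            rw [← intervalIntegral.integral_of_le ht, intervalIntegral.integral_const_mul]
    -- final assembly
    rw [rlInt]
    rw [hswap]
    have hfin : ∀ k : ℕ, (-1:ℝ)^n * ∫ s in (0:ℝ)..t, (t-s)^(α n - α 0 - 1) *
        ((-lam)^k * ∑ κ ∈ Omega n k,
          s ^ (∑ j, (κ j:ℝ) * α j.val) / Real.Gamma (1 + ∑ j, (κ j:ℝ) * α j.val))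
        = ((-1:ℝ)^n * Real.Gamma (α n - α 0)) * ((-lam)^k * ∑ κ ∈ Omega n k,
            t ^ ((∑ j, (κ j:ℝ) * α j.val) + (α n - α 0)) /
              Real.Gamma (1 + ((∑ j, (κ j:ℝ) * α j.val) + (α n - α 0)))) := by
      intro k
      rw [hval k ((-lam)^k)]
      ring
    rw [tsum_congr hfin, tsum_mul_left, pI]
    have hbij : ∀ k : ℕ, (-lam)^k * ∑ κ ∈ Theta n k,
        t ^ (∑ j, (κ j:ℝ) * α j.val) / Real.Gamma (1 + ∑ j, (κ j:ℝ) * α j.val)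
        = (-lam)^k * ∑ κ ∈ Omega n k,
            t ^ ((∑ j, (κ j:ℝ) * α j.val) + (α n - α 0)) /
              Real.Gamma (1 + ((∑ j, (κ j:ℝ) * α j.val) + (α n - α 0))) := by
      intro k
      rw [mySumBij n k hn α (fun x => t ^ x / Real.Gamma (1 + x))]
    rw [tsum_congr hbij]
    field_simp
end MainProof
end

section
/- Let (λ_n)_{n≥1} be positive reals and let 0 < ν ≤ 1. For n ≥ 1 and t ≥ 0 define p(n,t) = (−1)^{n−1} (λ_1/λ_n) ∑_{k=n−1}^∞ ( (−1)^k t^{kν} / Γ(kν + 1) ) ∑_{(k_1,…,k_n) ∈ Λ^k_n} ∏_{j=1}^n λ_j^{k_j}, and set p(0,t) = 0. Then for every n ≥ 1 and every t ≥ 0, p(n,t) = [n=1] + (I^{ν}_t ( −λ_n p(n,·) + λ_{n−1} p(n−1,·) ))(t), where [n=1] equals 1 if n = 1 and 0 otherwise; that is, when ν_n = ν for all n, the state probabilities of SDFPBP reduce to those of the fractional pure birth process. -/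
open scoped BigOperators

open MeasureTheory

/-- `Lambda n k` is the set of tuples `(k_1, …, k_n)` of nonnegative integers with
`k_1 + ⋯ + k_n = k` and `k_j ≥ 1` for `2 ≤ j ≤ n` (`k_1` may be `0`); the coordinate
`j : Fin n` represents the index `j + 1 ∈ {1, …, n}`. -/
def Lambda (n k : ℕ) : Finset (Fin n → ℕ) :=
  (Finset.Nat.antidiagonalTuple n k).filter
    (fun κ => ∀ j : Fin n, 1 ≤ j.val → 1 ≤ κ j)

/-- The state probabilities of the state dependent fractional pure birth process
(note that `Lambda n k = ∅` for `k < n - 1`, so the series over all `k : ℕ` agrees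
with the series starting at `k = n - 1`). -/
noncomputable def rBirth (lam : ℕ → ℝ) (ν : ℕ → ℝ) (n : ℕ) (t : ℝ) : ℝ :=
  (-1 : ℝ) ^ (n - 1) * (lam 1 / lam n) * ∑' k : ℕ, (-1 : ℝ) ^ k *
    ∑ κ ∈ Lambda n k,
      (t ^ (∑ j, (κ j : ℝ) * ν (j.val + 1)) * ∏ j, lam (j.val + 1) ^ (κ j)) /
        Real.Gamma (1 + ∑ j, (κ j : ℝ) * ν (j.val + 1))

/-- The state probabilities of the fractional pure birth process (FPBP), obtained
from SDFPBP with a constant fractional order `ν_n = ν`. -/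
noncomputable def pFPBP (lam : ℕ → ℝ) (ν : ℝ) (n : ℕ) (t : ℝ) : ℝ :=
  (-1 : ℝ) ^ (n - 1) * (lam 1 / lam n) * ∑' k : ℕ,
    ((-1 : ℝ) ^ k * t ^ ((k : ℝ) * ν) / Real.Gamma ((k : ℝ) * ν + 1)) *
      ∑ κ ∈ Lambda n k, ∏ j, lam (j.val + 1) ^ (κ j)

/-- Summability of the Mittag-Leffler-type series. -/
lemma gamma_summable {ν : ℝ} (hν : 0 < ν) {x : ℝ} (hx : 0 ≤ x) :
    Summable (fun k : ℕ => x ^ k / Real.Gamma ((k : ℝ) * ν + 1)) := by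
  set q : ℕ := ⌈1/ν⌉₊ + 1 with hq
  haveI : NeZero q := ⟨by omega⟩
  have hq1 : (1:ℝ) ≤ (q:ℝ) * ν := by
    have h1 : 1/ν ≤ (⌈1/ν⌉₊ : ℝ) := Nat.le_ceil _
    have : 1/ν ≤ (q:ℝ) := by push_cast [hq]; linarith
    calc (1:ℝ) = (1/ν) * ν := by field_simp
    _ ≤ (q:ℝ) * ν := by nlinarith
  set M : ℝ := max 1 x with hM
  have hM1 : (1:ℝ) ≤ M := le_max_left _ _
  set y : ℝ := x ^ q with hy
  have hy0 : 0 ≤ y := pow_nonneg hx q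
  -- the comparison series
  have hcomp : Summable (fun k : ℕ => M ^ q * (y ^ (k / q) / (Nat.factorial (k / q)))) := by
    apply Summable.mul_left
    have hf : Summable (fun p : ℕ × Fin q => y ^ p.1 / (Nat.factorial p.1) : ℕ × Fin q → ℝ) := by
      rw [summable_prod_of_nonneg]
      · constructor
        · intro m; exact summable_of_finite_support (Set.toFinite _)
        · simp only [tsum_fintype, Finset.sum_const, Finset.card_univ, Fintype.card_fin]
          simp only [nsmul_eq_mul]
          exact (Real.summable_pow_div_factorial y).mul_left _
      · intro p
        positivity
    have := ((Nat.divModEquiv q).summable_iff (f := fun p : ℕ × Fin q => y ^ p.1 / (Nat.factorial p.1))).mpr hf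
    exact this
  -- shifted comparison
  rw [← summable_nat_add_iff q]
  refine Summable.of_nonneg_of_le (fun k => by positivity) ?_
    ((summable_nat_add_iff q).mpr hcomp)
  · intro k
    set m : ℕ := (k + q) / q with hm
    have hm1 : 1 ≤ m := by
      rw [hm]; exact Nat.one_le_div_iff (Nat.pos_of_neZero q) |>.mpr (by omega)
    have hmq : m * q ≤ k + q := Nat.div_mul_le_self _ _
    -- Gamma lower bound
    have hGamma : (Nat.factorial m : ℝ) ≤ Real.Gamma (((k+q : ℕ) : ℝ) * ν + 1) := by
      rw [← Real.Gamma_nat_eq_factorial]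
      apply Real.Gamma_strictMonoOn_Ici.monotoneOn
      · simp only [Set.mem_Ici]
        have : (1:ℝ) ≤ (m:ℝ) := by exact_mod_cast hm1
        linarith
      · simp only [Set.mem_Ici]
        have h1 : (m:ℝ) ≤ ((k+q:ℕ):ℝ) * ν := by
          calc (m:ℝ) = (m:ℝ) * 1 := by ring
          _ ≤ (m:ℝ) * ((q:ℝ) * ν) := by
              apply mul_le_mul_of_nonneg_left hq1 (by positivity)
          _ = ((m * q : ℕ) : ℝ) * ν := by push_cast; ring
          _ ≤ ((k+q:ℕ):ℝ) * ν := by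
              apply mul_le_mul_of_nonneg_right _ hν.le
              exact_mod_cast hmq
        have : (1:ℝ) ≤ (m:ℝ) := by exact_mod_cast hm1
        linarith
      · have h1 : (m:ℝ) ≤ ((k+q:ℕ):ℝ) * ν := by
          calc (m:ℝ) = (m:ℝ) * 1 := by ring
          _ ≤ (m:ℝ) * ((q:ℝ) * ν) := by
              apply mul_le_mul_of_nonneg_left hq1 (by positivity)
          _ = ((m * q : ℕ) : ℝ) * ν := by push_cast; ring
          _ ≤ ((k+q:ℕ):ℝ) * ν := by
              apply mul_le_mul_of_nonneg_right _ hν.le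
              exact_mod_cast hmq
        linarith
    -- numerator bound
    have hnum : x ^ (k + q) ≤ M ^ q * y ^ m := by
      have hr : (k + q) % q < q := Nat.mod_lt _ (Nat.pos_of_neZero q)
      have hdecomp : k + q = q * m + (k + q) % q := by
        rw [hm]; exact (Nat.div_add_mod (k+q) q).symm
      calc x ^ (k + q) = (x ^ q) ^ m * x ^ ((k+q) % q) := by
            rw [← pow_mul, ← pow_add, ← hdecomp]
        _ ≤ y ^ m * M ^ q := by
            apply mul_le_mul_of_nonneg_left _ (by positivity)
            calc x ^ ((k+q) % q) ≤ M ^ ((k+q) % q) :=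
                  pow_le_pow_left₀ hx (le_max_right 1 x) _
              _ ≤ M ^ q := pow_le_pow_right₀ hM1 hr.le
        _ = M ^ q * y ^ m := by ring
    have hGpos : 0 < Real.Gamma (((k+q:ℕ):ℝ) * ν + 1) := by
      apply Real.Gamma_pos_of_pos; positivity
    calc x ^ (k+q) / Real.Gamma (((k+q:ℕ):ℝ) * ν + 1)
        ≤ (M ^ q * y ^ m) / (Nat.factorial m : ℝ) := by
          apply div_le_div₀ (by positivity) hnum (by positivity) hGamma
      _ = M ^ q * (y ^ m / (Nat.factorial m)) := by ring

lemma mem_Lambda {n k : ℕ} {κ : Fin n → ℕ} :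
    κ ∈ Lambda n k ↔ (∑ j, κ j) = k ∧ ∀ j : Fin n, 1 ≤ j.val → 1 ≤ κ j := by
  simp [Lambda, Finset.Nat.mem_antidiagonalTuple]

noncomputable def Scomb (lam : ℕ → ℝ) (n k : ℕ) : ℝ :=
  ∑ κ ∈ Lambda n k, ∏ j, lam (j.val + 1) ^ (κ j)

lemma Scomb_one (lam : ℕ → ℝ) (k : ℕ) : Scomb lam 1 k = lam 1 ^ k := by
  have h : Lambda 1 k = {fun _ => k} := by
    ext κ
    simp only [mem_Lambda, Finset.mem_singleton]
    constructor
    · rintro ⟨hs, -⟩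
      funext j
      have hj : j = 0 := Subsingleton.elim _ _
      subst hj
      simpa using hs
    · rintro rfl
      refine ⟨by simp, fun j hj => ?_⟩
      have : j.val = 0 := by omega
      omega
  simp [Scomb, h]

lemma Scomb_zero (lam : ℕ → ℝ) {n : ℕ} (hn : 2 ≤ n) : Scomb lam n 0 = 0 := by
  have h : Lambda n 0 = ∅ := by
    ext κ
    simp only [mem_Lambda, Finset.notMem_empty, iff_false, not_and]
    intro hs
    push_neg
    refine ⟨⟨1, by omega⟩, by simp, ?_⟩
    have := (Finset.sum_eq_zero_iff).mp hs ⟨1, by omega⟩ (Finset.mem_univ _)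
    omega
  simp [Scomb, h]

lemma Scomb_rec (lam : ℕ → ℝ) {m : ℕ} (hm : 1 ≤ m) (k : ℕ) :
    Scomb lam (m+1) (k+1)
      = lam (m+1) * (Scomb lam (m+1) k + Scomb lam m k) := by
  classical
  have hsplit :
      Scomb lam (m+1) (k+1)
        = (∑ κ ∈ (Lambda (m+1) (k+1)).filter (fun κ => κ (Fin.last m) = 1),
            ∏ j, lam (j.val + 1) ^ (κ j))
          + ∑ κ ∈ (Lambda (m+1) (k+1)).filter (fun κ => ¬ κ (Fin.last m) = 1),
            ∏ j, lam (j.val + 1) ^ (κ j) := by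
    rw [Scomb, ← Finset.sum_filter_add_sum_filter_not (Lambda (m+1) (k+1))
      (fun κ => κ (Fin.last m) = 1)]
  -- part B : κ last ≥ 2  ≃  Lambda (m+1) k
  have hB : ∑ κ ∈ (Lambda (m+1) (k+1)).filter (fun κ => ¬ κ (Fin.last m) = 1),
        ∏ j, lam (j.val + 1) ^ (κ j)
      = lam (m+1) * Scomb lam (m+1) k := by
    rw [Scomb, Finset.mul_sum]
    refine Finset.sum_bij' (fun κ _ => Function.update κ (Fin.last m) (κ (Fin.last m) - 1))
      (fun κ _ => Function.update κ (Fin.last m) (κ (Fin.last m) + 1)) ?hi ?hj ?li ?ri ?hh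
    case hi =>
      intro κ hκ
      rw [Finset.mem_filter, mem_Lambda] at hκ
      obtain ⟨⟨hs, hge⟩, hne⟩ := hκ
      have hlast : 2 ≤ κ (Fin.last m) := by
        have := hge (Fin.last m) (by simp [Fin.last]; omega)
        omega
      rw [mem_Lambda]
      constructor
      · rw [Finset.sum_update_of_mem (Finset.mem_univ _)]
        have h2 : ∑ x ∈ Finset.univ \ {Fin.last m}, κ x + κ (Fin.last m) = ∑ j, κ j := by
          rw [Finset.sdiff_singleton_eq_erase]
          exact Finset.sum_erase_add _ _ (Finset.mem_univ _)
        omega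
      · intro j hj
        rcases eq_or_ne j (Fin.last m) with rfl | hne'
        · rw [Function.update_self]; omega
        · rw [Function.update_of_ne hne']; exact hge j hj
    case hj =>
      intro κ hκ
      rw [mem_Lambda] at hκ
      obtain ⟨hs, hge⟩ := hκ
      have hlast : 1 ≤ κ (Fin.last m) := hge _ (by simp [Fin.last]; omega)
      rw [Finset.mem_filter, mem_Lambda]
      refine ⟨⟨?_, ?_⟩, ?_⟩
      · rw [Finset.sum_update_of_mem (Finset.mem_univ _)]
        have h2 : ∑ x ∈ Finset.univ \ {Fin.last m}, κ x + κ (Fin.last m) = ∑ j, κ j := by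
          rw [Finset.sdiff_singleton_eq_erase]
          exact Finset.sum_erase_add _ _ (Finset.mem_univ _)
        omega
      · intro j hj
        rcases eq_or_ne j (Fin.last m) with rfl | hne'
        · rw [Function.update_self]; omega
        · rw [Function.update_of_ne hne']; exact hge j hj
      · rw [Function.update_self]; omega
    case li =>
      intro κ hκ
      rw [Finset.mem_filter, mem_Lambda] at hκ
      obtain ⟨⟨hs, hge⟩, hne⟩ := hκ
      have hlast : 2 ≤ κ (Fin.last m) := by
        have := hge (Fin.last m) (by simp [Fin.last]; omega)
        omega
      funext j
      rcases eq_or_ne j (Fin.last m) with rfl | hne'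
      · simp only [Function.update_self]; omega
      · simp only [Function.update_of_ne hne']
    case ri =>
      intro κ hκ
      funext j
      rcases eq_or_ne j (Fin.last m) with rfl | hne'
      · simp only [Function.update_self]; omega
      · simp only [Function.update_of_ne hne']
    case hh =>
      intro κ hκ
      rw [Finset.mem_filter, mem_Lambda] at hκ
      obtain ⟨⟨hs, hge⟩, hne⟩ := hκ
      have hlast : 2 ≤ κ (Fin.last m) := by
        have := hge (Fin.last m) (by simp [Fin.last]; omega)
        omega
      rw [← Finset.prod_erase_mul _ _ (Finset.mem_univ (Fin.last m)),
          ← Finset.prod_erase_mul _ _ (Finset.mem_univ (Fin.last m))]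
      have hprod : ∀ j ∈ Finset.univ.erase (Fin.last m),
          lam (j.val + 1) ^ (Function.update κ (Fin.last m) (κ (Fin.last m) - 1) j)
            = lam (j.val + 1) ^ (κ j) := by
        intro j hj
        rw [Function.update_of_ne (Finset.ne_of_mem_erase hj)]
      rw [Finset.prod_congr rfl hprod, Function.update_self]
      have hexp : κ (Fin.last m) = (κ (Fin.last m) - 1) + 1 := by omega
      conv_lhs => rw [hexp]
      rw [pow_succ]
      simp only [Fin.val_last]
      ring
  -- part A : κ last = 1  ≃  Lambda m k
  have hA : ∑ κ ∈ (Lambda (m+1) (k+1)).filter (fun κ => κ (Fin.last m) = 1),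
        ∏ j, lam (j.val + 1) ^ (κ j)
      = lam (m+1) * Scomb lam m k := by
    rw [Scomb, Finset.mul_sum]
    refine Finset.sum_bij' (fun κ _ => κ ∘ Fin.castSucc)
      (fun κ _ => Fin.snoc κ 1) ?hi ?hj ?li ?ri ?hh
    case hi =>
      intro κ hκ
      rw [Finset.mem_filter, mem_Lambda] at hκ
      obtain ⟨⟨hs, hge⟩, h1⟩ := hκ
      rw [mem_Lambda]
      constructor
      · rw [Fin.sum_univ_castSucc (f := fun j => κ j), h1] at hs
        simpa using hs
      · intro j hj
        exact hge (Fin.castSucc j) (by simpa using hj)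
    case hj =>
      intro κ hκ
      rw [mem_Lambda] at hκ
      obtain ⟨hs, hge⟩ := hκ
      rw [Finset.mem_filter, mem_Lambda]
      refine ⟨⟨?_, ?_⟩, by simp⟩
      · rw [Fin.sum_univ_castSucc (f := fun j => Fin.snoc κ 1 j)]
        simp only [Fin.snoc_castSucc, Fin.snoc_last]
        omega
      · intro j hj
        rcases eq_or_ne j (Fin.last m) with rfl | hne'
        · simp
        · obtain ⟨i, rfl⟩ := Fin.exists_castSucc_eq.mpr hne'
          rw [Fin.snoc_castSucc]
          exact hge i (by simpa using hj)
    case li =>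
      intro κ hκ
      rw [Finset.mem_filter] at hκ
      funext j
      rcases eq_or_ne j (Fin.last m) with rfl | hne'
      · simp [hκ.2]
      · obtain ⟨i, rfl⟩ := Fin.exists_castSucc_eq.mpr hne'
        simp
    case ri =>
      intro κ hκ
      funext j
      simp
    case hh =>
      intro κ hκ
      rw [Finset.mem_filter, mem_Lambda] at hκ
      obtain ⟨⟨hs, hge⟩, h1⟩ := hκ
      rw [Fin.prod_univ_castSucc (f := fun j => lam (j.val + 1) ^ (κ j))]
      have hlast : lam ((Fin.last m).val + 1) ^ (κ (Fin.last m)) = lam (m+1) := by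
        rw [h1, pow_one, Fin.val_last]
      rw [hlast, mul_comm]
      congr 1
  rw [hsplit, hA, hB]
  ring

lemma Scomb_nonneg (lam : ℕ → ℝ) (n k : ℕ) (h : ∀ j, 1 ≤ j → j ≤ n → 0 ≤ lam j) :
    0 ≤ Scomb lam n k := by
  apply Finset.sum_nonneg
  intro κ hκ
  apply Finset.prod_nonneg
  intro j _
  exact pow_nonneg (h _ (by omega) (by omega)) _

lemma Scomb_le (lam : ℕ → ℝ) (n : ℕ) (h : ∀ j, 1 ≤ j → j ≤ n → 0 ≤ lam j) :
    ∃ D : ℝ, 1 ≤ D ∧ ∀ k, Scomb lam n k ≤ D ^ k := by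
  classical
  set B : ℝ := ∑ j ∈ Finset.range (n+1), max 1 (lam j) with hB
  have hB1 : (1:ℝ) ≤ B := by
    calc (1:ℝ) ≤ max 1 (lam 0) := le_max_left _ _
    _ ≤ B := Finset.single_le_sum (f := fun j => max 1 (lam j))
        (fun j _ => le_trans zero_le_one (le_max_left _ _)) (Finset.mem_range.mpr (by omega))
  have hlamB : ∀ j : Fin n, lam (j.val + 1) ≤ B := by
    intro j
    calc lam (j.val + 1) ≤ max 1 (lam (j.val+1)) := le_max_right _ _
    _ ≤ B := Finset.single_le_sum (f := fun j => max 1 (lam j))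
        (fun j _ => le_trans zero_le_one (le_max_left _ _)) (Finset.mem_range.mpr (by omega))
  refine ⟨(2:ℝ)^n * B, ?_, ?_⟩
  · have : (1:ℝ) ≤ (2:ℝ)^n := one_le_pow₀ (by norm_num)
    nlinarith
  intro k
  have hle : ∀ σ ∈ Lambda n k, ∀ j, σ j ≤ k := by
    intro σ hσ j
    rw [mem_Lambda] at hσ
    have := Finset.single_le_sum (f := σ) (fun i _ => Nat.zero_le _) (Finset.mem_univ j)
    omega
  have hcard : (Lambda n k).card ≤ (k+1)^n := by
    have h1 : (Lambda n k).card ≤ (Finset.univ : Finset (Fin n → Fin (k+1))).card := by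
      apply Finset.card_le_card_of_injOn (fun κ j => (⟨min (κ j) k, by omega⟩ : Fin (k+1)))
      · intro κ _; exact Finset.mem_univ _
      · intro κ hκ κ' hκ' heq
        funext j
        have h1 := hle κ (Finset.mem_coe.mp hκ) j
        have h2 := hle κ' (Finset.mem_coe.mp hκ') j
        have h3 := congrFun heq j
        simp only [Fin.mk.injEq] at h3
        omega
    simpa [Finset.card_univ, Fintype.card_fun, Fintype.card_fin] using h1
  have hterm : ∀ κ ∈ Lambda n k, ∏ j, lam (j.val + 1) ^ (κ j) ≤ B ^ k := by
    intro κ hκ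
    rw [mem_Lambda] at hκ
    calc ∏ j, lam (j.val + 1) ^ (κ j) ≤ ∏ j, B ^ (κ j) := by
          apply Finset.prod_le_prod
          · intro j _; exact pow_nonneg (h _ (by omega) (by omega)) _
          · intro j _; exact pow_le_pow_left₀ (h _ (by omega) (by omega)) (hlamB j) _
    _ = B ^ (∑ j, κ j) := by rw [← Finset.prod_pow_eq_pow_sum]
    _ = B ^ k := by rw [hκ.1]
  calc Scomb lam n k ≤ (Lambda n k).card • (B ^ k) :=
        Finset.sum_le_card_nsmul _ _ _ hterm
    _ = ((Lambda n k).card : ℝ) * B ^ k := by rw [nsmul_eq_mul]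
    _ ≤ ((k+1)^n : ℕ) * B ^ k := by
        apply mul_le_mul_of_nonneg_right _ (by positivity)
        exact_mod_cast hcard
    _ ≤ (((2:ℕ)^n)^k : ℕ) * B ^ k := by
        apply mul_le_mul_of_nonneg_right _ (by positivity)
        have : (k+1)^n ≤ ((2:ℕ)^n)^k := by
          calc (k+1)^n ≤ ((2:ℕ)^k)^n := Nat.pow_le_pow_left (Nat.lt_two_pow_self (n := k)) n
          _ = ((2:ℕ)^n)^k := by rw [← pow_mul, ← pow_mul, Nat.mul_comm]
        exact_mod_cast this
    _ = ((2:ℝ)^n * B) ^ k := by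
        push_cast
        ring

lemma beta_integrable {b : ℝ} (hb : 0 < b) {c : ℝ} (hc : 0 ≤ c) (t : ℝ) :
    IntervalIntegrable (fun s => s ^ c * (t - s) ^ (b - 1)) volume 0 t := by
  have h1 : IntervalIntegrable (fun s : ℝ => (t - s) ^ (b - 1)) volume 0 t := by
    have := (intervalIntegral.intervalIntegrable_rpow' (a := 0) (b := t)
      (r := b - 1) (by linarith)).comp_sub_left t
    simpa using this.symm
  apply h1.continuousOn_mul
  exact ContinuousOn.rpow_const continuousOn_id (fun x _ => Or.inr hc)

lemma beta_eval {a b : ℝ} (ha : 0 < a) (hb : 0 < b) {t : ℝ} (ht : 0 < t) :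
    ∫ s in (0:ℝ)..t, s ^ (a - 1) * (t - s) ^ (b - 1)
      = Real.Gamma a * Real.Gamma b / Real.Gamma (a + b) * t ^ (a + b - 1) := by
  have hC : ∫ s in (0:ℝ)..t, ((s:ℂ)) ^ ((a:ℂ) - 1) * (((t:ℝ):ℂ) - (s:ℂ)) ^ ((b:ℂ) - 1)
      = ((t:ℝ):ℂ) ^ ((a:ℂ) + (b:ℂ) - 1) * Complex.betaIntegral a b :=
    Complex.betaIntegral_scaled (a:ℂ) (b:ℂ) ht
  have hbeta : Complex.betaIntegral (a:ℂ) (b:ℂ)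
      = ((Real.Gamma a * Real.Gamma b / Real.Gamma (a+b) : ℝ) : ℂ) := by
    have h1 := Complex.Gamma_mul_Gamma_eq_betaIntegral
      (s := (a:ℂ)) (t := (b:ℂ)) (by simpa using ha) (by simpa using hb)
    have h2 : Complex.Gamma ((a:ℂ) + (b:ℂ)) ≠ 0 := by
      rw [show ((a:ℂ) + (b:ℂ)) = ((a + b : ℝ) : ℂ) by push_cast; ring, Complex.Gamma_ofReal]
      exact_mod_cast (Real.Gamma_pos_of_pos (by linarith)).ne'
    rw [Complex.Gamma_ofReal, Complex.Gamma_ofReal] at h1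
    rw [show ((a:ℂ) + (b:ℂ)) = ((a + b : ℝ) : ℂ) by push_cast; ring, Complex.Gamma_ofReal] at h1
    push_cast
    rw [eq_div_iff (by exact_mod_cast (Real.Gamma_pos_of_pos
      (by linarith : (0:ℝ) < a + b)).ne' : ((Real.Gamma (a+b) : ℝ) : ℂ) ≠ 0)]
    linear_combination -h1
  -- the complex integrand is the coercion of the real one on [0,t]
  have hcong : ∫ s in (0:ℝ)..t, ((s:ℂ)) ^ ((a:ℂ) - 1) * (((t:ℝ):ℂ) - (s:ℂ)) ^ ((b:ℂ) - 1)
      = ∫ s in (0:ℝ)..t, ((s ^ (a - 1) * (t - s) ^ (b - 1) : ℝ) : ℂ) := by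
    apply intervalIntegral.integral_congr
    intro s hs
    rw [Set.uIcc_of_le ht.le] at hs
    obtain ⟨hs0, hst⟩ := hs
    push_cast
    rw [Complex.ofReal_cpow hs0, Complex.ofReal_cpow (show (0:ℝ) ≤ t - s by linarith)]
    push_cast
    ring
  rw [hcong, intervalIntegral.integral_ofReal, hbeta] at hC
  rw [show ((a:ℂ) + (b:ℂ) - 1) = ((a + b - 1 : ℝ) : ℂ) by push_cast; ring,
    ← Complex.ofReal_cpow ht.le] at hC
  rw [← Complex.ofReal_mul] at hC
  have := Complex.ofReal_injective hC
  rw [this]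
  ring

lemma summable_helper {ν : ℝ} (hν : 0 < ν) {u : ℝ} (hu : 0 ≤ u) {c : ℕ → ℝ} {A D : ℝ}
    (hD : 0 ≤ D) (hc : ∀ k, |c k| ≤ A * D ^ k) :
    Summable (fun k : ℕ => c k * (u ^ ((k:ℝ) * ν) / Real.Gamma ((k:ℝ) * ν + 1))) := by
  refine Summable.of_norm_bounded
    (g := fun k => A * ((D * u ^ ν) ^ k / Real.Gamma ((k:ℝ) * ν + 1))) ?_ ?_
  · simpa [mul_div_assoc] using
      (gamma_summable hν (x := D * u ^ ν) (by positivity)).mul_left A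
  · intro k
    have hG : 0 < Real.Gamma ((k:ℝ) * ν + 1) := Real.Gamma_pos_of_pos (by positivity)
    have hupow : u ^ ((k:ℝ) * ν) = (u ^ ν) ^ k := by
      rw [← Real.rpow_natCast (u ^ ν) k, ← Real.rpow_mul hu, mul_comm]
    calc ‖c k * (u ^ ((k:ℝ) * ν) / Real.Gamma ((k:ℝ) * ν + 1))‖
        = |c k| * (u ^ ((k:ℝ) * ν) / Real.Gamma ((k:ℝ) * ν + 1)) := by
          rw [Real.norm_eq_abs, abs_mul, abs_of_nonneg
            (show (0:ℝ) ≤ u ^ ((k:ℝ) * ν) / Real.Gamma ((k:ℝ) * ν + 1) by positivity)]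
      _ ≤ (A * D ^ k) * (u ^ ((k:ℝ) * ν) / Real.Gamma ((k:ℝ) * ν + 1)) := by
          apply mul_le_mul_of_nonneg_right (hc k) (by positivity)
      _ = A * ((D * u ^ ν) ^ k / Real.Gamma ((k:ℝ) * ν + 1)) := by
          rw [hupow, mul_pow]; ring

lemma rlInt_step {ν : ℝ} (hν0 : 0 < ν) (hν1 : ν ≤ 1) {t : ℝ} (ht : 0 < t)
    (c : ℕ → ℝ) {A D : ℝ} (hD1 : 1 ≤ D) (hc : ∀ k, |c k| ≤ A * D ^ k) :
    rlInt ν (fun u => ∑' k, c k * (u ^ ((k:ℝ) * ν) / Real.Gamma ((k:ℝ) * ν + 1))) t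
      = ∑' k, c k * (t ^ (((k:ℝ)+1) * ν) / Real.Gamma (((k:ℝ)+1) * ν + 1)) := by
  have hΓν : 0 < Real.Gamma ν := Real.Gamma_pos_of_pos hν0
  have hA : 0 ≤ A := le_trans (abs_nonneg (c 0)) (by simpa using hc 0)
  have hD0 : (0:ℝ) ≤ D := by linarith
  set F : ℕ → ℝ → ℝ :=
    fun k s => (t - s) ^ (ν - 1) * (c k * (s ^ ((k:ℝ) * ν) / Real.Gamma ((k:ℝ) * ν + 1)))
    with hF
  -- generic beta integral evaluation
  have hval : ∀ (k : ℕ) (e : ℝ),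
      ∫ s in Set.Ioc (0:ℝ) t,
          (t - s) ^ (ν - 1) * (e * (s ^ ((k:ℝ) * ν) / Real.Gamma ((k:ℝ) * ν + 1)))
        = Real.Gamma ν * (e * (t ^ (((k:ℝ)+1) * ν) / Real.Gamma (((k:ℝ)+1) * ν + 1))) := by
    intro k e
    have hΓk : 0 < Real.Gamma ((k:ℝ) * ν + 1) := Real.Gamma_pos_of_pos (by positivity)
    rw [← intervalIntegral.integral_of_le ht.le]
    have : (fun s => (t - s) ^ (ν - 1) * (e * (s ^ ((k:ℝ) * ν) / Real.Gamma ((k:ℝ) * ν + 1))))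
        = fun s => (e / Real.Gamma ((k:ℝ) * ν + 1)) *
            (s ^ (((k:ℝ) * ν + 1) - 1) * (t - s) ^ (ν - 1)) := by
      funext s
      rw [show ((k:ℝ) * ν + 1) - 1 = (k:ℝ) * ν by ring]
      ring
    rw [this, intervalIntegral.integral_const_mul,
      beta_eval (by positivity) hν0 ht]
    rw [show (k:ℝ) * ν + 1 + ν - 1 = ((k:ℝ)+1) * ν by ring,
        show (k:ℝ) * ν + 1 + ν = ((k:ℝ)+1) * ν + 1 by ring]
    field_simp
  have hFint : ∀ k, Integrable (F k) (volume.restrict (Set.Ioc 0 t)) := by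
    intro k
    have h1 : IntervalIntegrable
        (fun s => s ^ ((k:ℝ) * ν) * (t - s) ^ (ν - 1)) volume 0 t :=
      beta_integrable hν0 (by positivity) t
    have h2 : IntervalIntegrable (F k) volume 0 t := by
      have heq : F k = fun s => (c k / Real.Gamma ((k:ℝ) * ν + 1)) *
          (s ^ ((k:ℝ) * ν) * (t - s) ^ (ν - 1)) := by
        funext s; rw [hF]; ring
      rw [heq]
      exact h1.const_mul _
    exact (intervalIntegrable_iff_integrableOn_Ioc_of_le ht.le).mp h2
  have hFnorm : ∀ k, ∫ s in Set.Ioc (0:ℝ) t, ‖F k s‖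
      = Real.Gamma ν * (|c k| * (t ^ (((k:ℝ)+1) * ν) / Real.Gamma (((k:ℝ)+1) * ν + 1))) := by
    intro k
    have hΓk : 0 < Real.Gamma ((k:ℝ) * ν + 1) := Real.Gamma_pos_of_pos (by positivity)
    rw [← hval k |c k|]
    apply MeasureTheory.setIntegral_congr_fun measurableSet_Ioc
    intro s hs
    obtain ⟨hs0, hst⟩ := hs
    have h1 : (0:ℝ) ≤ (t - s) ^ (ν - 1) := Real.rpow_nonneg (by linarith) _
    have h2 : (0:ℝ) ≤ s ^ ((k:ℝ) * ν) := Real.rpow_nonneg hs0.le _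
    rw [hF]
    simp only [Real.norm_eq_abs, abs_mul, abs_of_nonneg h1, abs_of_nonneg h2,
      abs_div, abs_of_nonneg hΓk.le]
  have hsum : Summable (fun k => ∫ s in Set.Ioc (0:ℝ) t, ‖F k s‖) := by
    rw [funext hFnorm]
    set w : ℕ → ℝ := fun k => Real.Gamma ν * |c (k - 1)| with hw
    have hwsum : Summable (fun k => w k * (t ^ ((k:ℝ) * ν) / Real.Gamma ((k:ℝ) * ν + 1))) := by
      apply summable_helper hν0 ht.le hD0 (A := Real.Gamma ν * A)
      intro k
      rw [hw]
      cases k with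
      | zero =>
        simp only [abs_mul, abs_of_nonneg hΓν.le, abs_abs, pow_zero, mul_one]
        calc Real.Gamma ν * |c (0-1)| ≤ Real.Gamma ν * (A * D ^ 0) := by
              apply mul_le_mul_of_nonneg_left _ hΓν.le
              exact le_trans (hc 0) (by simp)
          _ = Real.Gamma ν * A := by simp
      | succ m =>
        simp only [abs_mul, abs_of_nonneg hΓν.le, abs_abs]
        calc Real.Gamma ν * |c (m + 1 - 1)| ≤ Real.Gamma ν * (A * D ^ m) := by
              apply mul_le_mul_of_nonneg_left _ hΓν.le
              simpa using hc m
          _ ≤ Real.Gamma ν * A * D ^ (m+1) := by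
              have : D ^ m ≤ D ^ (m+1) := pow_le_pow_right₀ hD1 (by omega)
              nlinarith [mul_nonneg hΓν.le hA, pow_nonneg hD0 m]
    have := (summable_nat_add_iff 1).mpr hwsum
    apply this.congr
    intro k
    rw [hw]
    simp only [Nat.add_sub_cancel]
    push_cast
    ring
  -- interchange
  rw [rlInt, intervalIntegral.integral_of_le ht.le]
  have hinterchange :
      ∫ s in Set.Ioc (0:ℝ) t,
        (t - s) ^ (ν - 1) * (∑' k, c k * (s ^ ((k:ℝ) * ν) / Real.Gamma ((k:ℝ) * ν + 1)))
      = ∑' k, ∫ s in Set.Ioc (0:ℝ) t, F k s := by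
    calc ∫ s in Set.Ioc (0:ℝ) t,
          (t - s) ^ (ν - 1) * (∑' k, c k * (s ^ ((k:ℝ) * ν) / Real.Gamma ((k:ℝ) * ν + 1)))
        = ∫ s in Set.Ioc (0:ℝ) t, ∑' k, F k s := by
          apply MeasureTheory.setIntegral_congr_fun measurableSet_Ioc
          intro s _
          simp only [hF]
          rw [tsum_mul_left]
      _ = ∑' k, ∫ s in Set.Ioc (0:ℝ) t, F k s :=
          (MeasureTheory.integral_tsum_of_summable_integral_norm hFint hsum).symm
  rw [hinterchange]
  have hvals : (fun k => ∫ s in Set.Ioc (0:ℝ) t, F k s)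
      = fun k => Real.Gamma ν *
          (c k * (t ^ (((k:ℝ)+1) * ν) / Real.Gamma (((k:ℝ)+1) * ν + 1))) := by
    funext k; exact hval k (c k)
  rw [hvals, tsum_mul_left, ← mul_assoc]
  rw [one_div, inv_mul_cancel₀ hΓν.ne', one_mul]

lemma pFPBP_eq (lam : ℕ → ℝ) (ν : ℝ) (N : ℕ) (u : ℝ) :
    pFPBP lam ν N u
      = ∑' k : ℕ, (((-1:ℝ) ^ (N-1) * (lam 1 / lam N)) * ((-1:ℝ) ^ k * Scomb lam N k)) *
          (u ^ ((k:ℝ) * ν) / Real.Gamma ((k:ℝ) * ν + 1)) := by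
  rw [pFPBP, ← tsum_mul_left]
  exact tsum_congr (fun k => by rw [Scomb]; ring)

/-- The FPBP state probabilities solve the governing integral equations of SDFPBP
with constant order `ν`. -/
theorem fpbp_integral_equation (lam : ℕ → ℝ) (hlam : ∀ m, 1 ≤ m → 0 < lam m)
    (ν : ℝ) (hν0 : 0 < ν) (hν1 : ν ≤ 1)
    (n : ℕ) (hn : 1 ≤ n) (t : ℝ) (ht : 0 ≤ t) :
    pFPBP lam ν n t
      = (if n = 1 then (1:ℝ) else 0)
        + rlInt ν
            (fun u => -(lam n) * pFPBP lam ν n u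
              + lam (n - 1) * (if n = 1 then (0:ℝ) else pFPBP lam ν (n - 1) u)) t := by
  have hne : ∀ m, 1 ≤ m → lam m ≠ 0 := fun m hm => (hlam m hm).ne'
  have hnn : ∀ j, 1 ≤ j → j ≤ n → 0 ≤ lam j := fun j h1 _ => (hlam j h1).le
  obtain ⟨D, hD1, hSle⟩ := Scomb_le lam n hnn
  have hSnn : ∀ k, 0 ≤ Scomb lam n k := fun k => Scomb_nonneg lam n k hnn
  have hD0 : (0:ℝ) ≤ D := by linarith
  have habs : ∀ k, |(((-1:ℝ)^(n-1) * (lam 1 / lam n)) * ((-1:ℝ)^k * Scomb lam n k))|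
      ≤ |(-1:ℝ)^(n-1) * (lam 1 / lam n)| * D ^ k := by
    intro k
    have h1 : |(-1:ℝ)^k * Scomb lam n k| = Scomb lam n k := by
      rw [abs_mul, abs_pow, abs_neg, abs_one, one_pow, one_mul, abs_of_nonneg (hSnn k)]
    rw [abs_mul, h1]
    exact mul_le_mul_of_nonneg_left (hSle k) (abs_nonneg _)
  have hcabs : ∀ k, |(((-1:ℝ)^(n-1) * (lam 1 / lam n)) * ((-1:ℝ)^(k+1) * Scomb lam n (k+1)))|
      ≤ (|(-1:ℝ)^(n-1) * (lam 1 / lam n)| * D) * D ^ k := by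
    intro k
    calc |(((-1:ℝ)^(n-1) * (lam 1 / lam n)) * ((-1:ℝ)^(k+1) * Scomb lam n (k+1)))|
        ≤ |(-1:ℝ)^(n-1) * (lam 1 / lam n)| * D ^ (k+1) := habs (k+1)
      _ = (|(-1:ℝ)^(n-1) * (lam 1 / lam n)| * D) * D ^ k := by ring
  rcases eq_or_lt_of_le ht with rfl | htpos
  · -- t = 0
    have hrl : rlInt ν (fun u => -(lam n) * pFPBP lam ν n u
        + lam (n-1) * (if n = 1 then (0:ℝ) else pFPBP lam ν (n-1) u)) 0 = 0 := by
      rw [rlInt, intervalIntegral.integral_same, mul_zero]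
    rw [hrl, add_zero, pFPBP_eq]
    rw [tsum_eq_single 0 ?_]
    · simp only [Nat.cast_zero, zero_mul, Real.rpow_zero, zero_add, Real.Gamma_one,
        pow_zero, one_mul, div_one, mul_one]
      rcases eq_or_ne n 1 with rfl | hn1
      · rw [Scomb_one, if_pos rfl]
        simp [div_self (hne 1 le_rfl)]
      · rw [if_neg hn1, Scomb_zero lam (by omega)]
        ring
    · intro k hk
      have hkν : ((k:ℝ) * ν) ≠ 0 := by
        have : (0:ℝ) < (k:ℝ) := by exact_mod_cast Nat.pos_of_ne_zero hk
        positivity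
      rw [Real.zero_rpow hkν]
      simp
  · -- t > 0
    -- pointwise identity for the integrand
    have hf : ∀ u : ℝ, 0 ≤ u →
        -(lam n) * pFPBP lam ν n u
          + lam (n - 1) * (if n = 1 then (0:ℝ) else pFPBP lam ν (n - 1) u)
        = ∑' k, (((-1:ℝ)^(n-1) * (lam 1 / lam n)) * ((-1:ℝ)^(k+1) * Scomb lam n (k+1))) *
            (u ^ ((k:ℝ)*ν) / Real.Gamma ((k:ℝ)*ν+1)) := by
      intro u hu
      rcases eq_or_ne n 1 with hn1 | hn1
      · subst hn1
        rw [if_pos rfl, mul_zero, add_zero, pFPBP_eq, ← tsum_mul_left]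
        apply tsum_congr
        intro k
        simp only [Scomb_one, Nat.sub_self, pow_zero, one_mul]
        ring
      · obtain ⟨q, rfl⟩ : ∃ q, n = q + 2 := ⟨n - 2, by omega⟩
        have hq1 : 1 ≤ q + 1 := by omega
        obtain ⟨D', hD'1, hS'le⟩ := Scomb_le lam (q+1)
          (fun j h1 h2 => hnn j h1 (by omega))
        have hS'nn : ∀ k, 0 ≤ Scomb lam (q+1) k :=
          fun k => Scomb_nonneg lam (q+1) k (fun j h1 h2 => hnn j h1 (by omega))
        have hD'0 : (0:ℝ) ≤ D' := by linarith
        have habs' : ∀ k, |(((-1:ℝ)^(q+1-1) * (lam 1 / lam (q+1))) *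
              ((-1:ℝ)^k * Scomb lam (q+1) k))|
            ≤ |(-1:ℝ)^(q+1-1) * (lam 1 / lam (q+1))| * D' ^ k := by
          intro k
          have h1 : |(-1:ℝ)^k * Scomb lam (q+1) k| = Scomb lam (q+1) k := by
            rw [abs_mul, abs_pow, abs_neg, abs_one, one_pow, one_mul,
              abs_of_nonneg (hS'nn k)]
          rw [abs_mul, h1]
          exact mul_le_mul_of_nonneg_left (hS'le k) (abs_nonneg _)
        have s1 : Summable (fun k =>
            (((-1:ℝ)^(q+2-1) * (lam 1 / lam (q+2))) * ((-1:ℝ)^k * Scomb lam (q+2) k)) *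
              (u ^ ((k:ℝ)*ν) / Real.Gamma ((k:ℝ)*ν+1))) :=
          summable_helper hν0 hu hD0 habs
        have s2 : Summable (fun k =>
            (((-1:ℝ)^(q+1-1) * (lam 1 / lam (q+1))) * ((-1:ℝ)^k * Scomb lam (q+1) k)) *
              (u ^ ((k:ℝ)*ν) / Real.Gamma ((k:ℝ)*ν+1))) :=
          summable_helper hν0 hu hD'0 habs'
        have key : ∀ k : ℕ, ∀ T : ℝ,
            (-(lam (q+2))) * ((((-1:ℝ)^(q+2-1) * (lam 1 / lam (q+2))) *
                ((-1:ℝ)^k * Scomb lam (q+2) k)) * T)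
              + (lam (q+1)) * ((((-1:ℝ)^(q+1-1) * (lam 1 / lam (q+1))) *
                ((-1:ℝ)^k * Scomb lam (q+1) k)) * T)
            = (((-1:ℝ)^(q+2-1) * (lam 1 / lam (q+2))) *
                ((-1:ℝ)^(k+1) * Scomb lam (q+2) (k+1))) * T := by
          intro k T
          rw [Scomb_rec lam hq1 k]
          rw [show q + 2 - 1 = q + 1 from rfl, show q + 1 - 1 = q from rfl]
          have h1 : lam (q+2) ≠ 0 := hne _ (by omega)
          have h2 : lam (q+1) ≠ 0 := hne _ (by omega)
          field_simp
          ring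
        have main : (∑' k, (((-1:ℝ)^(q+2-1) * (lam 1 / lam (q+2))) *
              ((-1:ℝ)^(k+1) * Scomb lam (q+2) (k+1))) *
              (u ^ ((k:ℝ)*ν) / Real.Gamma ((k:ℝ)*ν+1)))
            = -(lam (q+2)) * pFPBP lam ν (q+2) u + lam (q+1) * pFPBP lam ν (q+1) u := by
          calc (∑' k, (((-1:ℝ)^(q+2-1) * (lam 1 / lam (q+2))) *
              ((-1:ℝ)^(k+1) * Scomb lam (q+2) (k+1))) *
              (u ^ ((k:ℝ)*ν) / Real.Gamma ((k:ℝ)*ν+1)))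
              = ∑' k, ((-(lam (q+2))) * ((((-1:ℝ)^(q+2-1) * (lam 1 / lam (q+2))) *
                    ((-1:ℝ)^k * Scomb lam (q+2) k)) *
                    (u ^ ((k:ℝ)*ν) / Real.Gamma ((k:ℝ)*ν+1)))
                  + (lam (q+1)) * ((((-1:ℝ)^(q+1-1) * (lam 1 / lam (q+1))) *
                    ((-1:ℝ)^k * Scomb lam (q+1) k)) *
                    (u ^ ((k:ℝ)*ν) / Real.Gamma ((k:ℝ)*ν+1)))) :=
                tsum_congr (fun k => (key k _).symm)
            _ = (∑' k, (-(lam (q+2))) * ((((-1:ℝ)^(q+2-1) * (lam 1 / lam (q+2))) *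
                    ((-1:ℝ)^k * Scomb lam (q+2) k)) *
                    (u ^ ((k:ℝ)*ν) / Real.Gamma ((k:ℝ)*ν+1))))
                  + ∑' k, (lam (q+1)) * ((((-1:ℝ)^(q+1-1) * (lam 1 / lam (q+1))) *
                    ((-1:ℝ)^k * Scomb lam (q+1) k)) *
                    (u ^ ((k:ℝ)*ν) / Real.Gamma ((k:ℝ)*ν+1))) :=
                Summable.tsum_add (s1.mul_left _) (s2.mul_left _)
            _ = -(lam (q+2)) * pFPBP lam ν (q+2) u + lam (q+1) * pFPBP lam ν (q+1) u := by
                rw [tsum_mul_left, tsum_mul_left, ← pFPBP_eq, ← pFPBP_eq]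
        rw [if_neg hn1]
        rw [show q + 2 - 1 = q + 1 from rfl]
        exact main.symm
    -- rewrite the fractional integral
    have hrl : rlInt ν
        (fun u => -(lam n) * pFPBP lam ν n u
          + lam (n - 1) * (if n = 1 then (0:ℝ) else pFPBP lam ν (n - 1) u)) t
        = ∑' k, (((-1:ℝ)^(n-1) * (lam 1 / lam n)) * ((-1:ℝ)^(k+1) * Scomb lam n (k+1))) *
            (t ^ (((k:ℝ)+1) * ν) / Real.Gamma (((k:ℝ)+1) * ν + 1)) := by
      have hcong : rlInt ν
          (fun u => -(lam n) * pFPBP lam ν n u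
            + lam (n - 1) * (if n = 1 then (0:ℝ) else pFPBP lam ν (n - 1) u)) t
          = rlInt ν (fun u => ∑' k,
              (((-1:ℝ)^(n-1) * (lam 1 / lam n)) * ((-1:ℝ)^(k+1) * Scomb lam n (k+1))) *
              (u ^ ((k:ℝ)*ν) / Real.Gamma ((k:ℝ)*ν+1))) t := by
        rw [rlInt, rlInt]
        congr 1
        apply intervalIntegral.integral_congr
        intro s hs
        rw [Set.uIcc_of_le ht] at hs
        dsimp only
        rw [hf s hs.1]
      rw [hcong]
      exact rlInt_step hν0 hν1 htpos _ hD1 hcabs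
    -- final assembly
    have hsum_t : Summable (fun k =>
        (((-1:ℝ)^(n-1) * (lam 1 / lam n)) * ((-1:ℝ)^k * Scomb lam n k)) *
          (t ^ ((k:ℝ)*ν) / Real.Gamma ((k:ℝ)*ν+1))) :=
      summable_helper hν0 ht hD0 habs
    rw [pFPBP_eq, Summable.tsum_eq_zero_add hsum_t, hrl]
    congr 1
    · -- constant term
      simp only [Nat.cast_zero, zero_mul, Real.rpow_zero, zero_add, Real.Gamma_one,
        pow_zero, one_mul, div_one, mul_one]
      rcases eq_or_ne n 1 with rfl | hn1
      · rw [Scomb_one, if_pos rfl]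
        simp [div_self (hne 1 le_rfl)]
      · rw [if_neg hn1, Scomb_zero lam (by omega), mul_zero]
    · -- series term
      apply tsum_congr
      intro k
      push_cast
      ring_nf
end

section
/- Let λ > 0, let 0 < α_j ≤ 1 for all j ≥ 0, and for integers k ≥ n ≥ 0 define the ADM component u(n,k,t) = (−1)^n (−λ)^k ∑_{(k_0,…,k_n) ∈ Θ^k_n} t^{∑_{j=0}^n k_j α_j} / Γ(1 + ∑_{j=0}^n k_j α_j) for t ≥ 0, with u(n,k,t) = 0 for 0 ≤ k < n and u(−1,k,t) = 0. Then for every n ≥ 0 and every k ≥ 1, u(n,k,t) = −λ · (I^{α_n}_t ( u(n,k−1,·) − u(n−1,k−1,·) ))(t) for all t ≥ 0, and u(0,0,t) = 1. -/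
open scoped BigOperators

/-- The `k`-th Adomian decomposition component of the SDTFPP-I state probability
`p^{α_n}(n, ·)`.  Since `Theta n k = ∅` for `k < n`, we automatically have
`admComp lam α n k t = 0` for `k < n`. -/
noncomputable def admComp (lam : ℝ) (α : ℕ → ℝ) (n k : ℕ) (t : ℝ) : ℝ :=
  (-1 : ℝ) ^ n * (-lam) ^ k *
    ∑ κ ∈ Theta n k,
      t ^ (∑ j, (κ j : ℝ) * α j.val) / Real.Gamma (1 + ∑ j, (κ j : ℝ) * α j.val)

/-! ### Auxiliary lemmas -/

lemma beta_real_aux {a b t : ℝ} (ha : 0 < a) (hb : 0 < b) (ht : 0 < t) :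
    ∫ x in (0:ℝ)..t, x ^ (b-1) * (t - x) ^ (a-1) =
      Real.Gamma b * Real.Gamma a / Real.Gamma (b+a) * t ^ (b+a-1) := by
  have hba : (0:ℝ) < Real.Gamma (b + a) := Real.Gamma_pos_of_pos (by linarith)
  apply Complex.ofReal_injective
  rw [← intervalIntegral.integral_ofReal]
  have h1 : ∫ x in (0:ℝ)..t, ((x ^ (b-1) * (t - x) ^ (a-1) : ℝ) : ℂ)
      = ∫ x in (0:ℝ)..t, (x : ℂ) ^ ((b:ℂ) - 1) * ((t:ℂ) - (x:ℂ)) ^ ((a:ℂ) - 1) := by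
    apply intervalIntegral.integral_congr
    intro x hx
    rw [Set.uIcc_of_le ht.le] at hx
    push_cast
    rw [Complex.ofReal_cpow hx.1, Complex.ofReal_cpow (by linarith [hx.2] : (0:ℝ) ≤ t - x)]
    push_cast
    ring
  rw [h1, Complex.betaIntegral_scaled b a ht]
  have h2 : Complex.Gamma b * Complex.Gamma a
      = Complex.Gamma (b + a) * Complex.betaIntegral b a := by
    have := Complex.Gamma_mul_Gamma_eq_betaIntegral (s := (b:ℂ)) (t := (a:ℂ))
      (by simpa using hb) (by simpa using ha)
    simpa using this
  have hne : Complex.Gamma ((b:ℂ) + a) ≠ 0 := by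
    rw [show ((b:ℂ) + a) = ((b + a : ℝ) : ℂ) by push_cast; ring, Complex.Gamma_ofReal]
    exact_mod_cast hba.ne'
  have h3 : Complex.betaIntegral b a
      = Complex.Gamma b * Complex.Gamma a / Complex.Gamma ((b:ℂ) + a) := by
    rw [h2, mul_comm, mul_div_assoc, div_self hne, mul_one]
  rw [h3]
  rw [show ((b:ℂ) + (a:ℂ) - 1) = ((b + a - 1 : ℝ) : ℂ) by push_cast; ring,
    ← Complex.ofReal_cpow ht.le]
  simp only [Complex.Gamma_ofReal]
  rw [show ((b:ℂ) + (a:ℂ)) = ((b + a : ℝ) : ℂ) by push_cast; ring, Complex.Gamma_ofReal]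
  push_cast
  ring

lemma integrable_kernel_aux {a β t : ℝ} (ha : 0 < a) (hβ : 0 ≤ β) :
    IntervalIntegrable (fun s => (t - s) ^ (a - 1) * s ^ β) MeasureTheory.volume 0 t := by
  have h1 : IntervalIntegrable (fun s : ℝ => (t - s) ^ (a - 1)) MeasureTheory.volume 0 t := by
    have := (intervalIntegral.intervalIntegrable_rpow' (a := 0) (b := t)
      (r := a - 1) (by linarith)).comp_sub_left t
    simpa using this.symm
  exact h1.mul_continuousOn (Real.continuous_rpow_const hβ).continuousOn

lemma rlInt_monomial {a β t : ℝ} (ha : 0 < a) (hβ : 0 ≤ β) (ht : 0 ≤ t) :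
    rlInt a (fun s => s ^ β / Real.Gamma (1 + β)) t
      = t ^ (β + a) / Real.Gamma (1 + (β + a)) := by
  have hga : (0:ℝ) < Real.Gamma a := Real.Gamma_pos_of_pos ha
  have hgb : (0:ℝ) < Real.Gamma (1 + β) := Real.Gamma_pos_of_pos (by linarith)
  rcases eq_or_lt_of_le ht with h | h
  · rw [rlInt, ← h, intervalIntegral.integral_same, mul_zero,
      Real.zero_rpow (by linarith : β + a ≠ 0), zero_div]
  · rw [rlInt]
    have : (fun s : ℝ => (t - s) ^ (a - 1) * (s ^ β / Real.Gamma (1 + β)))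
        = fun s : ℝ => (1 / Real.Gamma (1 + β)) * (s ^ ((β + 1) - 1) * (t - s) ^ (a - 1)) := by
      funext s; rw [show β + 1 - 1 = β by ring]; field_simp
    rw [this, intervalIntegral.integral_const_mul, beta_real_aux ha (by linarith) h]
    have hgc : (0:ℝ) < Real.Gamma (1 + (β + a)) := Real.Gamma_pos_of_pos (by linarith)
    rw [show β + 1 + a - 1 = β + a by ring, show β + 1 + a = 1 + (β + a) by ring,
      show Real.Gamma (β + 1) = Real.Gamma (1 + β) by rw [add_comm]]
    field_simp

lemma rlInt_const_mul (a c t : ℝ) (f : ℝ → ℝ) :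
    rlInt a (fun u => c * f u) t = c * rlInt a f t := by
  unfold rlInt
  have : (fun s : ℝ => (t - s) ^ (a - 1) * (c * f s))
      = fun s : ℝ => c * ((t - s) ^ (a - 1) * f s) := by funext s; ring
  rw [this, intervalIntegral.integral_const_mul]
  ring

lemma rlInt_sum {a t : ℝ} (ha : 0 < a) (ht : 0 ≤ t) {ι : Type*} (s : Finset ι)
    (β : ι → ℝ) (hβ : ∀ i ∈ s, 0 ≤ β i) :
    rlInt a (fun u => ∑ i ∈ s, u ^ β i / Real.Gamma (1 + β i)) t
      = ∑ i ∈ s, t ^ (β i + a) / Real.Gamma (1 + (β i + a)) := by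
  have h1 : ∀ i ∈ s, IntervalIntegrable
      (fun u : ℝ => (t - u) ^ (a - 1) * (u ^ β i / Real.Gamma (1 + β i)))
      MeasureTheory.volume 0 t := by
    intro i hi
    have := (integrable_kernel_aux (t := t) ha (hβ i hi)).mul_const
      (1 / Real.Gamma (1 + β i))
    have heq : (fun u : ℝ => (t - u) ^ (a - 1) * u ^ β i * (1 / Real.Gamma (1 + β i)))
        = fun u : ℝ => (t - u) ^ (a - 1) * (u ^ β i / Real.Gamma (1 + β i)) := by
      funext u; ring
    rwa [heq] at this
  unfold rlInt
  simp only [Finset.mul_sum]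
  rw [intervalIntegral.integral_finset_sum h1, Finset.mul_sum]
  refine Finset.sum_congr rfl fun i hi => ?_
  exact rlInt_monomial ha (hβ i hi) ht

lemma mem_Theta {n k : ℕ} {κ : Fin (n+1) → ℕ} :
    κ ∈ Theta n k ↔ (∑ j, κ j) = k ∧ ∀ j : Fin (n+1), 1 ≤ j.val → 1 ≤ κ j := by
  simp [Theta, Finset.Nat.mem_antidiagonalTuple]

lemma Theta_zero (k : ℕ) : Theta 0 k = {fun _ => k} := by
  ext κ
  simp only [mem_Theta, Finset.mem_singleton]
  constructor
  · rintro ⟨h1, _⟩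
    funext j
    have hj : j = (0 : Fin 1) := Fin.fin_one_eq_zero j
    subst hj
    simpa using h1
  · rintro rfl
    exact ⟨by simp, fun j hj => by omega⟩

lemma theta_split (n k : ℕ) (α : ℕ → ℝ) (G : ℝ → ℝ) :
    ∑ κ ∈ Theta (n+1) (k+1), G (∑ j, (κ j : ℝ) * α j.val)
      = ∑ κ ∈ Theta (n+1) k, G ((∑ j, (κ j : ℝ) * α j.val) + α (n+1))
      + ∑ κ ∈ Theta n k, G ((∑ j, (κ j : ℝ) * α j.val) + α (n+1)) := by
  set L : Fin (n+2) := Fin.last (n+1) with hL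
  have hLval : L.val = n + 1 := rfl
  have hLpos : 1 ≤ L.val := by rw [hLval]; omega
  have hcast : ∀ i : Fin (n+1), i.castSucc ≠ L := fun i => (Fin.castSucc_lt_last i).ne
  have keyN : ∀ κ : Fin (n+2) → ℕ, (∑ j, κ j) = (∑ j : Fin (n+1), κ j.castSucc) + κ L := by
    intro κ; rw [Fin.sum_univ_castSucc]
  have keyR : ∀ κ : Fin (n+2) → ℕ,
      (∑ j, (κ j : ℝ) * α j.val)
        = (∑ j : Fin (n+1), (κ j.castSucc : ℝ) * α j.val) + (κ L : ℝ) * α (n+1) := by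
    intro κ
    rw [Fin.sum_univ_castSucc]
    simp [Fin.coe_castSucc, hLval]
    exact Or.inl rfl
  rw [← Finset.sum_filter_add_sum_filter_not (Theta (n+1) (k+1)) (fun κ => 2 ≤ κ L)]
  congr 1
  · -- κ L ≥ 2 : decrement last coordinate
    refine Finset.sum_nbij' (fun κ => Function.update κ L (κ L - 1))
      (fun κ => Function.update κ L (κ L + 1)) ?_ ?_ ?_ ?_ ?_
    · intro κ hκ
      rw [Finset.mem_filter, mem_Theta] at hκ
      obtain ⟨⟨hsum, hcon⟩, h2⟩ := hκ
      rw [mem_Theta]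
      constructor
      · rw [keyN] at hsum ⊢
        have e1 : ∀ i : Fin (n+1), Function.update κ L (κ L - 1) i.castSucc = κ i.castSucc :=
          fun i => Function.update_of_ne (hcast i) _ _
        simp only [e1, Function.update_self]
        omega
      · intro j hj
        rcases eq_or_ne j L with rfl | hne
        · rw [Function.update_self]; omega
        · rw [Function.update_of_ne hne]; exact hcon j hj
    · intro κ hκ
      rw [mem_Theta] at hκ
      obtain ⟨hsum, hcon⟩ := hκ
      have h1 : 1 ≤ κ L := hcon L hLpos
      rw [Finset.mem_filter, mem_Theta]
      refine ⟨⟨?_, ?_⟩, by rw [Function.update_self]; omega⟩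
      · rw [keyN] at hsum ⊢
        have e1 : ∀ i : Fin (n+1), Function.update κ L (κ L + 1) i.castSucc = κ i.castSucc :=
          fun i => Function.update_of_ne (hcast i) _ _
        simp only [e1, Function.update_self]
        omega
      · intro j hj
        rcases eq_or_ne j L with rfl | hne
        · rw [Function.update_self]; omega
        · rw [Function.update_of_ne hne]; exact hcon j hj
    · intro κ hκ
      rw [Finset.mem_filter, mem_Theta] at hκ
      obtain ⟨⟨hsum, hcon⟩, h2⟩ := hκ
      rw [Function.update_idem, Function.update_self, Nat.sub_add_cancel (by omega : 1 ≤ κ L),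
        Function.update_eq_self]
    · intro κ hκ
      rw [Function.update_idem, Function.update_self, Nat.add_sub_cancel, Function.update_eq_self]
    · intro κ hκ
      rw [Finset.mem_filter, mem_Theta] at hκ
      obtain ⟨⟨hsum, hcon⟩, h2⟩ := hκ
      congr 1
      rw [keyR, keyR]
      have e1 : ∀ i : Fin (n+1), Function.update κ L (κ L - 1) i.castSucc = κ i.castSucc :=
        fun i => Function.update_of_ne (hcast i) _ _
      simp only [e1, Function.update_self]
      rw [Nat.cast_sub (by omega : 1 ≤ κ L)]
      push_cast
      ring
  · -- κ L = 1 : drop last coordinate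
    refine Finset.sum_nbij' (fun κ => Fin.init κ) (fun κ => Fin.snoc κ 1) ?_ ?_ ?_ ?_ ?_
    · intro κ hκ
      rw [Finset.mem_filter, mem_Theta] at hκ
      obtain ⟨⟨hsum, hcon⟩, h2⟩ := hκ
      have hL1 : κ L = 1 := by have := hcon L hLpos; omega
      rw [mem_Theta]
      have e1 : ∀ i : Fin (n+1), Fin.init κ i = κ i.castSucc := fun i => rfl
      constructor
      · rw [keyN] at hsum
        simp only [e1]
        omega
      · intro j hj
        rw [e1 j]
        exact hcon j.castSucc (by simpa using hj)
    · intro κ hκ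
      rw [mem_Theta] at hκ
      obtain ⟨hsum, hcon⟩ := hκ
      have hsl : (Fin.snoc κ 1 : Fin (n+2) → ℕ) L = 1 := by
        rw [hL]; exact Fin.snoc_last _ _
      have hsc : ∀ i : Fin (n+1), (Fin.snoc κ 1 : Fin (n+2) → ℕ) i.castSucc = κ i :=
        fun i => Fin.snoc_castSucc _ _ _
      rw [Finset.mem_filter, mem_Theta]
      refine ⟨⟨?_, ?_⟩, by rw [hsl]; omega⟩
      · rw [keyN]
        simp only [hsc, hsl]
        omega
      · intro j hj
        refine Fin.lastCases ?_ (fun i hi => ?_) j hj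
        · intro _
          rw [← hL, hsl]
        · rw [hsc i]
          exact hcon i (by simpa using hi)
    · intro κ hκ
      rw [Finset.mem_filter, mem_Theta] at hκ
      obtain ⟨⟨hsum, hcon⟩, h2⟩ := hκ
      have hL1 : κ L = 1 := by have := hcon L hLpos; omega
      conv_rhs => rw [← Fin.snoc_init_self κ]
      rw [show κ (Fin.last (n+1)) = 1 from hL1]
    · intro κ hκ
      funext i
      show (Fin.snoc κ 1 : Fin (n+2) → ℕ) i.castSucc = κ i
      exact Fin.snoc_castSucc _ _ _
    · intro κ hκ
      rw [Finset.mem_filter, mem_Theta] at hκ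
      obtain ⟨⟨hsum, hcon⟩, h2⟩ := hκ
      have hL1 : κ L = 1 := by have := hcon L hLpos; omega
      congr 1
      rw [keyR]
      have e1 : ∀ i : Fin (n+1), Fin.init κ i = κ i.castSucc := fun i => rfl
      simp only [e1, hL1]
      push_cast
      ring

/-- The Adomian decomposition components of SDTFPP-I satisfy the ADM recursion
(with the convention that the component for state `−1` is `0`), and the zeroth
component of state `0` is identically `1`. -/
theorem admComp_recursion (lam : ℝ) (hlam : 0 < lam)
    (α : ℕ → ℝ) (hα : ∀ j, 0 < α j ∧ α j ≤ 1) :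
    (∀ n : ℕ, ∀ k : ℕ, 1 ≤ k → ∀ t : ℝ, 0 ≤ t →
        admComp lam α n k t
          = -lam * rlInt (α n)
              (fun u => admComp lam α n (k - 1) u
                - (if n = 0 then (0:ℝ) else admComp lam α (n - 1) (k - 1) u)) t)
      ∧ (∀ t : ℝ, admComp lam α 0 0 t = 1) := by
  constructor
  · intro n k hk t ht
    obtain ⟨m, rfl⟩ : ∃ m, k = m + 1 := ⟨k - 1, by omega⟩
    have hE : ∀ (N : ℕ) (κ : Fin (N+1) → ℕ), (0:ℝ) ≤ ∑ j, (κ j : ℝ) * α j.val :=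
      fun N κ => Finset.sum_nonneg fun j _ => mul_nonneg (Nat.cast_nonneg _) (hα _).1.le
    cases n with
    | zero =>
      have hfun : (fun u => admComp lam α 0 (m + 1 - 1) u
            - (if (0:ℕ) = 0 then (0:ℝ) else admComp lam α (0 - 1) (m + 1 - 1) u))
          = fun u => (-lam)^m * (u ^ ((m:ℝ) * α 0) / Real.Gamma (1 + (m:ℝ) * α 0)) := by
        funext u
        simp [admComp, Theta_zero, Finset.sum_singleton, Fin.sum_univ_one]
      rw [hfun, rlInt_const_mul,
        rlInt_monomial (hα 0).1 (mul_nonneg (Nat.cast_nonneg m) (hα 0).1.le) ht]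
      have hLHS : admComp lam α 0 (m+1) t
          = (-lam)^(m+1) * (t ^ (((m:ℝ)+1) * α 0) / Real.Gamma (1 + ((m:ℝ)+1) * α 0)) := by
        simp [admComp, Theta_zero, Finset.sum_singleton, Fin.sum_univ_one]
      rw [hLHS, show (m:ℝ) * α 0 + α 0 = ((m:ℝ)+1) * α 0 by ring, pow_succ]
      ring
    | succ j =>
      have hne : ¬(j + 1 = 0) := by omega
      simp only [if_neg hne, Nat.add_sub_cancel]
      -- the function under the fractional integral, rewritten as constant times sums
      have hfun : (fun u => admComp lam α (j+1) m u - admComp lam α j m u)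
          = fun u => ((-1:ℝ))^(j+1) * (-lam)^m *
              (∑ i ∈ (Theta (j+1) m).disjSum (Theta j m),
                u ^ (Sum.elim
                    (fun κ : Fin (j+2) → ℕ => ∑ j', (κ j' : ℝ) * α j'.val)
                    (fun κ : Fin (j+1) → ℕ => ∑ j', (κ j' : ℝ) * α j'.val) i)
                  / Real.Gamma (1 + Sum.elim
                    (fun κ : Fin (j+2) → ℕ => ∑ j', (κ j' : ℝ) * α j'.val)
                    (fun κ : Fin (j+1) → ℕ => ∑ j', (κ j' : ℝ) * α j'.val) i)) := by
        funext u
        rw [Finset.sum_disjSum]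
        simp only [Sum.elim_inl, Sum.elim_inr, admComp, pow_succ]
        ring
      rw [hfun, rlInt_const_mul, rlInt_sum (hα (j+1)).1 ht _ _ ?hpos]
      case hpos =>
        rintro (κ | κ) _
        · exact hE _ κ
        · exact hE _ κ
      rw [Finset.sum_disjSum]
      simp only [Sum.elim_inl, Sum.elim_inr]
      have hsplit := theta_split j m α
        (fun x => t ^ x / Real.Gamma (1 + x))
      show admComp lam α (j+1) (m+1) t = _
      rw [admComp, hsplit, pow_succ]
      ring
  · intro t
    simp [admComp, Theta_zero, Finset.sum_singleton, Fin.sum_univ_one, Real.Gamma_one]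
end
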